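/- arXiv:1805.04898 — 6 statements merged into one kernel-verified Lean document; each statement's English description precedes it below -/
import Mathlib

section
/- Let F be the restriction to Δ^𝒜 of a continuously differentiable map defined on an open neighborhood of Δ^𝒜 in ℝ^𝒜, with derivative DF, and suppose F is statically stable: z·DF(x)z ≤ 0 for all x ∈ Δ^𝒜 and z ∈ TΔ^𝒜. Assume Q1, A1-i and A1-ii, fix x ∈ Δ^𝒜, and assume the regularity condition holds at (a, F(x)) for every a ∈ 𝒜. Let z_a be the unique exact-rate transition vector for a at F(x) and Δx := Σ_{a∈𝒜} x_a z_a. Then t ↦ G^F(x + tΔx) has a right derivative at t = 0 equal to Δx·DF(x)Δx + H^F(x), hence ≤ H^F(x) ≤ 0; moreover this right derivative equals 0 if and only if x ∈ NE(F). -/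
open MeasureTheory Finset
open scoped Classical

/-- The maximal payoff among actions in `S`. -/
noncomputable def piStar {A : Type*} (π : A → ℝ) (S : Finset A) : ℝ :=
  if h : S.Nonempty then S.sup' h π else 0

/-- The set of optimal actions in `S`: `b_*[π](S)`. -/
noncomputable def bStar {A : Type*} (π : A → ℝ) (S : Finset A) : Finset A :=
  S.filter (fun b => π b = piStar π S)

/-- `Q(q) = μ_Q((-∞, q])`. -/
noncomputable def Qfun (μQ : Measure ℝ) (q : ℝ) : ℝ := (μQ (Set.Iic q)).toReal

/-- The individual ex-ante first-order net gain `g_{a*}[π]`. -/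
noncomputable def gain {A : Type*} [Fintype A] [DecidableEq A]
    (P : A → Finset A → ℝ) (μQ : Measure ℝ) (π : A → ℝ) (a : A) : ℝ :=
  ∑ A' ∈ (Finset.univ.erase a).powerset,
    P a A' * ∫ q, max (piStar π A' - π a - q) 0 ∂μQ

/-- `g_{**}[π](S) = min_{b ∈ S} g_{b*}[π]`. -/
noncomputable def gainMin {A : Type*} [Fintype A] [DecidableEq A]
    (P : A → Finset A → ℝ) (μQ : Measure ℝ) (π : A → ℝ) (S : Finset A) : ℝ :=
  if h : S.Nonempty then S.inf' h (fun b => gain P μQ π b) else 0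

/-- The individual ex-ante second-order net gain `h_{a*}[π]`. -/
noncomputable def gain2 {A : Type*} [Fintype A] [DecidableEq A]
    (P : A → Finset A → ℝ) (μQ : Measure ℝ) (π : A → ℝ) (a : A) : ℝ :=
  ∑ A' ∈ (Finset.univ.erase a).powerset,
    P a A' * Qfun μQ (piStar π A' - π a) * (gainMin P μQ π A' - gain P μQ π a)

/-- The aggregate first-order gain `G(x)[π] = Σ_a x_a g_{a*}[π]`. -/
noncomputable def Gagg {A : Type*} [Fintype A] [DecidableEq A]
    (P : A → Finset A → ℝ) (μQ : Measure ℝ) (x π : A → ℝ) : ℝ :=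
  ∑ a : A, x a * gain P μQ π a

/-- The aggregate second-order gain `H(x)[π] = Σ_a x_a h_{a*}[π]`. -/
noncomputable def Hagg {A : Type*} [Fintype A] [DecidableEq A]
    (P : A → Finset A → ℝ) (μQ : Measure ℝ) (x π : A → ℝ) : ℝ :=
  ∑ a : A, x a * gain2 P μQ π a

/-- `Δx = Σ_a x_a z_a`, where `z_a` is the exact-rate transition vector for `a` at `π`
whose target is the optimal available action chosen by the selector `sel`. -/
noncomputable def deltaX {A : Type*} [Fintype A] [DecidableEq A]
    (P : A → Finset A → ℝ) (μQ : Measure ℝ) (π x : A → ℝ)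
    (sel : A → Finset A → A) : A → ℝ :=
  fun b => ∑ a : A, x a *
    (∑ A' ∈ (Finset.univ.erase a).powerset,
      P a A' * Qfun μQ (piStar π A' - π a) *
        ((if b = sel a A' then (1 : ℝ) else 0) - (if b = a then (1 : ℝ) else 0)))


section Helpers

open Filter Topology

variable {μ : Measure ℝ}

/-- `φ(c) = ∫ (c - q)⁺ dμ`. -/
noncomputable def phiQ (μ : Measure ℝ) (c : ℝ) : ℝ := ∫ q, max (c - q) 0 ∂μ

lemma Qfun_nonneg (c : ℝ) : 0 ≤ Qfun μ c := ENNReal.toReal_nonneg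

lemma Qfun_mono [IsFiniteMeasure μ] {c c' : ℝ} (h : c ≤ c') : Qfun μ c ≤ Qfun μ c' :=
  ENNReal.toReal_mono (measure_ne_top μ _) (measure_mono (Set.Iic_subset_Iic.2 h))

lemma measure_Iic_eq_zero [IsFiniteMeasure μ] {c : ℝ} (h : Qfun μ c = 0) :
    μ (Set.Iic c) = 0 := by
  rw [Qfun, ENNReal.toReal_eq_zero_iff] at h
  exact h.resolve_right (measure_ne_top μ _)

lemma ae_nonneg (h0 : μ (Set.Iio 0) = 0) : ∀ᵐ q ∂μ, (0:ℝ) ≤ q := by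
  rw [ae_iff]
  convert h0 using 2
  ext q; simp [Set.mem_Iio, not_le]

lemma integrable_posPart [IsFiniteMeasure μ] (h0 : μ (Set.Iio 0) = 0) (c : ℝ) :
    Integrable (fun q => max (c - q) 0) μ := by
  refine Integrable.mono' (integrable_const (max c 0)) ?_ ?_
  · exact ((continuous_const.sub continuous_id).max continuous_const).aestronglyMeasurable
  · filter_upwards [ae_nonneg h0] with q hq
    rw [Real.norm_eq_abs, abs_of_nonneg (le_max_right _ _)]
    exact max_le_max (by linarith) le_rfl

lemma phiQ_nonneg (c : ℝ) : 0 ≤ phiQ μ c :=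
  integral_nonneg fun q => le_max_right _ _

lemma phiQ_nonpos_eq_zero (h0 : μ (Set.Iio 0) = 0) {c : ℝ} (hc : c ≤ 0) :
    phiQ μ c = 0 := by
  rw [phiQ]
  refine integral_eq_zero_of_ae ?_
  filter_upwards [ae_nonneg h0] with q hq
  rw [max_eq_right (by linarith)]
  rfl

lemma phiQ_bounds [IsFiniteMeasure μ] (h0 : μ (Set.Iio 0) = 0) {c c' : ℝ} (h : c ≤ c') :
    (c' - c) * Qfun μ c ≤ phiQ μ c' - phiQ μ c ∧
      phiQ μ c' - phiQ μ c ≤ (c' - c) * Qfun μ c' := by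
  have hint := integrable_posPart (μ := μ) h0
  have hdiff : phiQ μ c' - phiQ μ c
      = ∫ q, (max (c' - q) 0 - max (c - q) 0) ∂μ :=
    (integral_sub (hint c') (hint c)).symm
  constructor
  · have hpt : ∀ q, Set.indicator (Set.Iic c) (fun _ => c' - c) q
        ≤ max (c' - q) 0 - max (c - q) 0 := by
      intro q
      by_cases hq : q ≤ c
      · rw [Set.indicator_of_mem (by exact hq), max_eq_left (by linarith),
          max_eq_left (by linarith)]
        linarith
      · rw [Set.indicator_of_notMem (by exact hq)]
        have := max_le_max (show c - q ≤ c' - q by linarith) (le_rfl : (0:ℝ) ≤ 0)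
        linarith
    have := integral_mono ((integrable_const (c' - c)).indicator measurableSet_Iic)
      ((hint c').sub (hint c)) hpt
    simp only [Pi.sub_apply] at this
    rwa [integral_indicator_const _ measurableSet_Iic, smul_eq_mul, mul_comm, measureReal_def, ← Qfun,
      ← hdiff] at this
  · have hpt : ∀ q, max (c' - q) 0 - max (c - q) 0
        ≤ Set.indicator (Set.Iic c') (fun _ => c' - c) q := by
      intro q
      by_cases hq : q ≤ c'
      · rw [Set.indicator_of_mem (by exact hq), max_eq_left (by linarith)]
        have := le_max_left (c - q) 0
        linarith
      · rw [Set.indicator_of_notMem (by exact hq), max_eq_right (by linarith),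
          max_eq_right (by linarith)]
        simp
    have := integral_mono ((hint c').sub (hint c))
      ((integrable_const (c' - c)).indicator measurableSet_Iic) hpt
    simp only [Pi.sub_apply] at this
    rwa [integral_indicator_const _ measurableSet_Iic, smul_eq_mul, mul_comm, measureReal_def, ← Qfun,
      ← hdiff] at this

lemma phiQ_mono [IsFiniteMeasure μ] (h0 : μ (Set.Iio 0) = 0) {c c' : ℝ} (h : c ≤ c') :
    phiQ μ c ≤ phiQ μ c' := by
  have := (phiQ_bounds h0 h).1
  nlinarith [Qfun_nonneg (μ := μ) c]

lemma phiQ_pos [IsFiniteMeasure μ] (h0 : μ (Set.Iio 0) = 0) {c : ℝ} (hc : 0 < c)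
    (hQ : 0 < Qfun μ (c / 2)) : 0 < phiQ μ c := by
  have h2 : c / 2 ≤ c := by linarith
  have hb := (phiQ_bounds h0 (show c / 2 ≤ c from h2)).1
  have h0' : phiQ μ (c / 2) ≥ 0 := phiQ_nonneg _
  nlinarith

lemma Qfun_continuousAt [IsProbabilityMeasure μ] {c : ℝ} (hc : μ {c} = 0) :
    ContinuousAt (Qfun μ) c := by
  have hQ : Qfun μ = ⇑(ProbabilityTheory.cdf μ) := by
    funext q; rw [ProbabilityTheory.cdf_eq_real]; rfl
  rw [hQ]
  have hmono := ProbabilityTheory.monotone_cdf μ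
  rw [hmono.continuousAt_iff_leftLim_eq_rightLim]
  have hright : Function.rightLim (ProbabilityTheory.cdf μ) c = ProbabilityTheory.cdf μ c :=
    (ProbabilityTheory.cdf μ).rightLim_eq c
  have hsing : (ProbabilityTheory.cdf μ).measure {c}
      = ENNReal.ofReal (ProbabilityTheory.cdf μ c
        - Function.leftLim (ProbabilityTheory.cdf μ) c) :=
    (ProbabilityTheory.cdf μ).measure_singleton c
  rw [ProbabilityTheory.measure_cdf, hc] at hsing
  have hle : ProbabilityTheory.cdf μ c - Function.leftLim (ProbabilityTheory.cdf μ) c ≤ 0 := by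
    by_contra hlt
    push_neg at hlt
    have h2 := hsing.symm
    rw [ENNReal.ofReal_eq_zero] at h2
    linarith
  have hge : Function.leftLim (ProbabilityTheory.cdf μ) c ≤ ProbabilityTheory.cdf μ c :=
    hmono.leftLim_le le_rfl
  rw [hright]
  linarith

lemma hasDerivAt_phiQ [IsProbabilityMeasure μ] (h0 : μ (Set.Iio 0) = 0) {c : ℝ}
    (hc : μ {c} = 0) : HasDerivAt (phiQ μ) (Qfun μ c) c := by
  rw [hasDerivAt_iff_tendsto_slope]
  have key : ∀ y : ℝ, y ≠ c → |slope (phiQ μ) c y - Qfun μ c| ≤ |Qfun μ y - Qfun μ c| := by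
    intro y hy
    rcases lt_or_gt_of_ne hy with h | h
    · -- y < c
      have hb := phiQ_bounds (μ := μ) h0 h.le
      have hpos : 0 < c - y := by linarith
      have hslope : slope (phiQ μ) c y = (phiQ μ c - phiQ μ y) / (c - y) := by
        rw [slope_def_field]
        rw [div_eq_div_iff (by linarith) (by linarith)]
        ring
      have h1 : Qfun μ y ≤ slope (phiQ μ) c y := by
        rw [hslope, le_div_iff₀ hpos]; nlinarith [hb.2]
      have h2 : slope (phiQ μ) c y ≤ Qfun μ c := by
        rw [hslope, div_le_iff₀ hpos]; nlinarith [hb.1]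
      have hQm : Qfun μ y ≤ Qfun μ c := Qfun_mono h.le
      rw [abs_of_nonpos (by linarith), abs_of_nonpos (by linarith)]
      linarith
    · -- c < y
      have hb := phiQ_bounds (μ := μ) h0 h.le
      have hpos : 0 < y - c := by linarith
      have hslope : slope (phiQ μ) c y = (phiQ μ y - phiQ μ c) / (y - c) := slope_def_field _ _ _
      have h1 : Qfun μ c ≤ slope (phiQ μ) c y := by
        rw [hslope, le_div_iff₀ hpos]; nlinarith [hb.1]
      have h2 : slope (phiQ μ) c y ≤ Qfun μ y := by
        rw [hslope, div_le_iff₀ hpos]; nlinarith [hb.2]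
      have hQm : Qfun μ c ≤ Qfun μ y := Qfun_mono h.le
      rw [abs_of_nonneg (by linarith), abs_of_nonneg (by linarith)]
      linarith
  have hQc : Tendsto (fun y => |Qfun μ y - Qfun μ c|) (𝓝[≠] c) (𝓝 0) := by
    have h1 : Tendsto (Qfun μ) (𝓝[≠] c) (𝓝 (Qfun μ c)) :=
      (Qfun_continuousAt hc).tendsto.mono_left nhdsWithin_le_nhds
    have h2 : Tendsto (fun _ : ℝ => Qfun μ c) (𝓝[≠] c) (𝓝 (Qfun μ c)) := tendsto_const_nhds
    simpa using (h1.sub h2).abs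
  rw [tendsto_iff_dist_tendsto_zero]
  refine squeeze_zero' ?_ ?_ hQc
  · exact Eventually.of_forall fun y => dist_nonneg
  · filter_upwards [self_mem_nhdsWithin] with y hy
    rw [Real.dist_eq]
    exact key y hy

end Helpers

section Comb

open Filter Topology

variable {A : Type*} [Fintype A] [DecidableEq A]

lemma sum_powerset_insert'' {M : Type*} [AddCommMonoid M] {s : Finset A} {a : A}
    (ha : a ∉ s) (f : Finset A → M) :
    ∑ T ∈ (insert a s).powerset, f T = ∑ T ∈ s.powerset, (f T + f (insert a T)) := by
  rw [Finset.powerset_insert, Finset.sum_union, Finset.sum_image, Finset.sum_add_distrib]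
  · intro T hT T' hT' hins
    have hT1 : a ∉ T := fun h => ha (Finset.mem_powerset.1 hT h)
    have hT2 : a ∉ T' := fun h => ha (Finset.mem_powerset.1 hT' h)
    rw [← Finset.erase_insert hT1, ← Finset.erase_insert hT2, hins]
  · rw [Finset.disjoint_right]
    intro T hT hT'
    obtain ⟨T', _, rfl⟩ := Finset.mem_image.1 hT
    exact ha (Finset.mem_powerset.1 hT' (Finset.mem_insert_self a T'))

variable {P : A → Finset A → ℝ} {μ : Measure ℝ}

lemma D_eq (b c : A) (hbc : b ≠ c) :
    ((Finset.univ.erase b).erase c : Finset A) = (Finset.univ.erase c).erase b :=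
  Finset.erase_right_comm

lemma erase_eq_insert (b c : A) (hbc : b ≠ c) :
    (Finset.univ.erase b : Finset A) = insert c ((Finset.univ.erase b).erase c) := by
  rw [Finset.insert_erase (Finset.mem_erase.2 ⟨Ne.symm hbc, Finset.mem_univ c⟩)]

/-- Subset-sum equality for the marginal weights, from A1-ii. -/
lemma subset_sum_eq
    (hPsupp : ∀ a A', ¬ A' ⊆ Finset.univ.erase a → P a A' = 0)
    (hPsum : ∀ a, ∑ A' ∈ (Finset.univ.erase a).powerset, P a A' = 1)
    (hA1ii : ∀ a b : A, ∀ S : Finset A, S ⊆ Finset.univ \ {a, b} →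
      ∑ A' ∈ (Finset.univ.erase a).powerset.filter (fun A' => (A' ∩ S).Nonempty), P a A'
        = ∑ A' ∈ (Finset.univ.erase b).powerset.filter (fun A' => (A' ∩ S).Nonempty), P b A')
    (b c : A) (hbc : b ≠ c) (R : Finset A) (hR : R ⊆ (Finset.univ.erase b).erase c) :
    ∑ T ∈ R.powerset, (P b T + P b (insert c T))
      = ∑ T ∈ R.powerset, (P c T + P c (insert b T)) := by
  set D : Finset A := (Finset.univ.erase b).erase c with hD
  set S : Finset A := D \ R with hS
  have hDuniv : D = Finset.univ \ {b, c} := by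
    ext d
    simp only [hD, Finset.mem_erase, Finset.mem_univ, and_true, Finset.mem_sdiff,
      Finset.mem_insert, Finset.mem_singleton, true_and, not_or]
    tauto
  have hSsub : S ⊆ Finset.univ \ {b, c} := hDuniv ▸ Finset.sdiff_subset
  have hmain := hA1ii b c S hSsub
  -- complements
  have hkey : ∀ (u v : A), u ≠ v →
      R ⊆ (Finset.univ.erase u).erase v →
      S = ((Finset.univ.erase u).erase v) \ R →
      ∑ A' ∈ (Finset.univ.erase u).powerset.filter
          (fun A' => ¬(A' ∩ S).Nonempty), P u A'
        = ∑ T ∈ R.powerset, (P u T + P u (insert v T)) := by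
    intro u v huv hRu hSu
    have hvR : v ∉ R := fun h => (Finset.mem_erase.1 (hRu h)).1 rfl
    have hfilter : (Finset.univ.erase u).powerset.filter (fun A' => ¬(A' ∩ S).Nonempty)
        = (insert v R).powerset := by
      ext A'
      simp only [Finset.mem_filter, Finset.mem_powerset, Finset.not_nonempty_iff_eq_empty]
      constructor
      · rintro ⟨hsub, hdisj⟩
        intro d hd
        by_cases hdv : d = v
        · exact hdv ▸ Finset.mem_insert_self v R
        · refine Finset.mem_insert_of_mem ?_
          by_contra hdR
          have hdS : d ∈ S := by
            rw [hSu]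
            exact Finset.mem_sdiff.2 ⟨Finset.mem_erase.2 ⟨hdv, hsub hd⟩, hdR⟩
          exact absurd (Finset.eq_empty_iff_forall_notMem.1 hdisj d)
            (by simp [Finset.mem_inter, hd, hdS])
      · intro hsub
        constructor
        · intro d hd
          rcases Finset.mem_insert.1 (hsub hd) with rfl | hdR
          · exact Finset.mem_erase.2 ⟨Ne.symm huv, Finset.mem_univ d⟩
          · exact Finset.mem_erase.1 (hRu hdR) |>.2
        · rw [Finset.eq_empty_iff_forall_notMem]
          intro d hd
          have hd1 := Finset.mem_inter.1 hd
          have hdS := hd1.2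
          rw [hSu] at hdS
          have := Finset.mem_sdiff.1 hdS
          rcases Finset.mem_insert.1 (hsub hd1.1) with rfl | hdR
          · exact (Finset.mem_erase.1 this.1).1 rfl
          · exact this.2 hdR
    rw [hfilter, sum_powerset_insert'' hvR]
  have hnot1 := hkey b c hbc hR rfl
  have hnot2 := hkey c b (Ne.symm hbc) (by rw [← D_eq b c hbc]; exact hR)
    (by rw [← D_eq b c hbc])
  have htot1 := hPsum b
  have htot2 := hPsum c
  rw [← Finset.sum_filter_add_sum_filter_not ((Finset.univ.erase b).powerset)
    (fun A' => (A' ∩ S).Nonempty)] at htot1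
  rw [← Finset.sum_filter_add_sum_filter_not ((Finset.univ.erase c).powerset)
    (fun A' => (A' ∩ S).Nonempty)] at htot2
  rw [hnot1] at htot1
  rw [hnot2] at htot2
  linarith

/-- Marginal weights agree: Möbius inversion on subset sums. -/
lemma marginal_eq
    (hPsupp : ∀ a A', ¬ A' ⊆ Finset.univ.erase a → P a A' = 0)
    (hPsum : ∀ a, ∑ A' ∈ (Finset.univ.erase a).powerset, P a A' = 1)
    (hA1ii : ∀ a b : A, ∀ S : Finset A, S ⊆ Finset.univ \ {a, b} →
      ∑ A' ∈ (Finset.univ.erase a).powerset.filter (fun A' => (A' ∩ S).Nonempty), P a A'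
        = ∑ A' ∈ (Finset.univ.erase b).powerset.filter (fun A' => (A' ∩ S).Nonempty), P b A')
    (b c : A) (hbc : b ≠ c) :
    ∀ n (R : Finset A), R.card ≤ n → R ⊆ (Finset.univ.erase b).erase c →
      P b R + P b (insert c R) = P c R + P c (insert b R) := by
  intro n
  induction n with
  | zero =>
    intro R hcard hR
    have hRe : R = ∅ := Finset.card_eq_zero.1 (Nat.le_zero.1 hcard)
    subst hRe
    have := subset_sum_eq hPsupp hPsum hA1ii b c hbc ∅ (Finset.empty_subset _)
    simpa using this
  | succ n ih =>
    intro R hcard hR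
    have h1 := subset_sum_eq hPsupp hPsum hA1ii b c hbc R hR
    rw [← Finset.add_sum_erase _ _ (Finset.mem_powerset_self R),
      ← Finset.add_sum_erase _ _ (Finset.mem_powerset_self R)] at h1
    have h2 : ∑ T ∈ R.powerset.erase R, (P b T + P b (insert c T))
        = ∑ T ∈ R.powerset.erase R, (P c T + P c (insert b T)) := by
      refine Finset.sum_congr rfl fun T hT => ?_
      have hT1 := Finset.mem_erase.1 hT
      have hT2 : T ⊆ R := Finset.mem_powerset.1 hT1.2
      have hcard' : T.card ≤ n := by
        have := Finset.card_lt_card (Finset.ssubset_iff_subset_ne.2 ⟨hT2, hT1.1⟩)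
        omega
      exact ih T hcard' (hT2.trans hR)
    linarith

end Comb

section GainLemmas

open Filter Topology

variable {A : Type*} [Fintype A] [DecidableEq A]
variable {P : A → Finset A → ℝ} {μ : Measure ℝ}

lemma gain_eq_phi (π : A → ℝ) (a : A) :
    gain P μ π a = ∑ A' ∈ (Finset.univ.erase a).powerset,
      P a A' * phiQ μ (piStar π A' - π a) := rfl

lemma piStar_of_nonempty {π : A → ℝ} {S : Finset A} (h : S.Nonempty) :
    piStar π S = S.sup' h π := dif_pos h

lemma le_piStar {π : A → ℝ} {S : Finset A} {d : A} (hd : d ∈ S) : π d ≤ piStar π S := by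
  rw [piStar_of_nonempty ⟨d, hd⟩]
  exact Finset.le_sup' π hd

lemma piStar_le {π : A → ℝ} {S : Finset A} (h : S.Nonempty) {m : ℝ}
    (hb : ∀ d ∈ S, π d ≤ m) : piStar π S ≤ m := by
  rw [piStar_of_nonempty h]
  exact Finset.sup'_le h π hb

lemma piStar_insert {π : A → ℝ} {T : Finset A} (h : T.Nonempty) (c : A) :
    piStar π (insert c T) = max (π c) (piStar π T) := by
  apply le_antisymm
  · refine piStar_le (Finset.insert_nonempty c T) fun d hd => ?_
    rcases Finset.mem_insert.1 hd with rfl | hd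
    · exact le_max_left _ _
    · exact le_trans (le_piStar hd) (le_max_right _ _)
  · refine max_le (le_piStar (Finset.mem_insert_self c T)) ?_
    exact piStar_le h fun d hd => le_piStar (Finset.mem_insert_of_mem hd)

lemma piStar_singleton {π : A → ℝ} (c : A) : piStar π {c} = π c := by
  rw [piStar_of_nonempty ⟨c, Finset.mem_singleton_self c⟩, Finset.sup'_singleton]

variable [IsProbabilityMeasure μ]

/-- Monotonicity: a better action has a smaller first-order gain. -/
lemma gain_mono (h0 : μ (Set.Iio 0) = 0)
    (hPnn : ∀ a A', 0 ≤ P a A')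
    (hPsupp : ∀ a A', ¬ A' ⊆ Finset.univ.erase a → P a A' = 0)
    (hPempty : ∀ a, P a (∅ : Finset A) = 0)
    (hPsum : ∀ a, ∑ A' ∈ (Finset.univ.erase a).powerset, P a A' = 1)
    (hA1ii : ∀ a b : A, ∀ S : Finset A, S ⊆ Finset.univ \ {a, b} →
      ∑ A' ∈ (Finset.univ.erase a).powerset.filter (fun A' => (A' ∩ S).Nonempty), P a A'
        = ∑ A' ∈ (Finset.univ.erase b).powerset.filter (fun A' => (A' ∩ S).Nonempty), P b A')
    (π : A → ℝ) {b c : A} (hπ : π c ≤ π b) :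
    gain P μ π b ≤ gain P μ π c := by
  by_cases hbc : b = c
  · subst hbc; exact le_rfl
  set D : Finset A := (Finset.univ.erase b).erase c with hD
  set E : Finset (Finset A) := D.powerset.filter (fun T => T.Nonempty) with hE
  have hcD : c ∉ D := fun h => (Finset.mem_erase.1 h).1 rfl
  have hbD : b ∉ D := by
    intro h
    rw [hD, D_eq b c hbc] at h
    exact (Finset.mem_erase.1 h).1 rfl
  have hmemE : ∀ T ∈ E, T ⊆ D ∧ T.Nonempty := fun T hT =>
    ⟨Finset.mem_powerset.1 (Finset.mem_filter.1 hT).1, (Finset.mem_filter.1 hT).2⟩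
  -- step 1 : rewrite gain b
  have hstep1 : gain P μ π b
      = ∑ T ∈ E, (P b T + P b (insert c T)) * phiQ μ (piStar π T - π b) := by
    rw [gain_eq_phi, erase_eq_insert b c hbc, ← hD, sum_powerset_insert'' hcD,
      ← Finset.sum_filter_add_sum_filter_not D.powerset (fun T => T.Nonempty), ← hE]
    have hz : ∑ T ∈ D.powerset.filter (fun T => ¬ T.Nonempty),
        (P b T * phiQ μ (piStar π T - π b)
          + P b (insert c T) * phiQ μ (piStar π (insert c T) - π b)) = 0 := by
      refine Finset.sum_eq_zero fun T hT => ?_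
      have hTe : T = ∅ := by
        have := (Finset.mem_filter.1 hT).2
        rwa [Finset.not_nonempty_iff_eq_empty] at this
      subst hTe
      rw [hPempty, LawfulSingleton.insert_empty_eq, piStar_singleton, zero_mul, zero_add,
        phiQ_nonpos_eq_zero h0 (by linarith), mul_zero]
    rw [hz, add_zero]
    refine Finset.sum_congr rfl fun T hT => ?_
    obtain ⟨hTD, hTne⟩ := hmemE T hT
    have hkey : phiQ μ (piStar π (insert c T) - π b) = phiQ μ (piStar π T - π b) := by
      rw [piStar_insert hTne]
      rcases le_total (π c) (piStar π T) with hle | hle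
      · rw [max_eq_right hle]
      · rw [max_eq_left hle, phiQ_nonpos_eq_zero h0 (by linarith),
          phiQ_nonpos_eq_zero h0 (by linarith)]
    rw [hkey]; ring
  -- step 2 : lower bound for gain c
  have hstep2 : ∑ T ∈ E, (P c T + P c (insert b T)) * phiQ μ (piStar π T - π b)
      ≤ gain P μ π c := by
    rw [gain_eq_phi, erase_eq_insert c b (Ne.symm hbc), ← D_eq b c hbc, ← hD,
      sum_powerset_insert'' hbD,
      ← Finset.sum_filter_add_sum_filter_not D.powerset (fun T => T.Nonempty), ← hE]
    have hpos : 0 ≤ ∑ T ∈ D.powerset.filter (fun T => ¬ T.Nonempty),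
        (P c T * phiQ μ (piStar π T - π c)
          + P c (insert b T) * phiQ μ (piStar π (insert b T) - π c)) := by
      refine Finset.sum_nonneg fun T _ => ?_
      exact add_nonneg (mul_nonneg (hPnn c T) (phiQ_nonneg _))
        (mul_nonneg (hPnn c (insert b T)) (phiQ_nonneg _))
    have hmain : ∑ T ∈ E, (P c T + P c (insert b T)) * phiQ μ (piStar π T - π b)
        ≤ ∑ T ∈ E, (P c T * phiQ μ (piStar π T - π c)
          + P c (insert b T) * phiQ μ (piStar π (insert b T) - π c)) := by
      refine Finset.sum_le_sum fun T hT => ?_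
      obtain ⟨hTD, hTne⟩ := hmemE T hT
      have h1 : phiQ μ (piStar π T - π b) ≤ phiQ μ (piStar π T - π c) :=
        phiQ_mono h0 (by linarith)
      have h2 : phiQ μ (piStar π T - π b) ≤ phiQ μ (piStar π (insert b T) - π c) := by
        refine phiQ_mono h0 ?_
        rw [piStar_insert hTne]
        have := le_max_right (π b) (piStar π T)
        linarith
      have hp1 := hPnn c T
      have hp2 := hPnn c (insert b T)
      nlinarith
    linarith
  -- step 3 : marginal equality on E
  have hstep3 : ∑ T ∈ E, (P b T + P b (insert c T)) * phiQ μ (piStar π T - π b)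
      = ∑ T ∈ E, (P c T + P c (insert b T)) * phiQ μ (piStar π T - π b) := by
    refine Finset.sum_congr rfl fun T hT => ?_
    rw [marginal_eq hPsupp hPsum hA1ii b c hbc T.card T le_rfl (hmemE T hT).1]
  rw [hstep1, hstep3]
  exact hstep2

/-- A globally optimal action has zero first-order gain. -/
lemma gain_zero_of_max (h0 : μ (Set.Iio 0) = 0)
    (hPempty : ∀ a, P a (∅ : Finset A) = 0)
    (π : A → ℝ) {c : A} (hmax : ∀ d, π d ≤ π c) : gain P μ π c = 0 := by
  rw [gain_eq_phi]
  refine Finset.sum_eq_zero fun A' hA' => ?_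
  rcases Finset.eq_empty_or_nonempty A' with rfl | hne
  · rw [hPempty]; ring
  · rw [phiQ_nonpos_eq_zero h0 (by
      have := piStar_le hne (fun d _ => hmax d)
      linarith)]
    ring

/-- A suboptimal action has positive first-order gain. -/
lemma gain_pos (h0 : μ (Set.Iio 0) = 0)
    (hPnn : ∀ a A', 0 ≤ P a A')
    (hQ1b : ∀ q : ℝ, 0 < q → 0 < Qfun μ q)
    (hA1i : ∀ a b : A, b ≠ a →
      0 < ∑ A' ∈ (Finset.univ.erase a).powerset.filter (fun A' => b ∈ A'), P a A')
    (π : A → ℝ) {a b : A} (hab : π a < π b) : 0 < gain P μ π a := by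
  have hba : b ≠ a := fun h => absurd hab (by rw [h]; exact lt_irrefl _)
  obtain ⟨A₀, hA₀mem, hA₀pos⟩ : ∃ A₀ ∈ (Finset.univ.erase a).powerset.filter
      (fun A' => b ∈ A'), 0 < P a A₀ := by
    by_contra hcon
    push_neg at hcon
    have : ∑ A' ∈ (Finset.univ.erase a).powerset.filter (fun A' => b ∈ A'), P a A' = 0 :=
      Finset.sum_eq_zero fun A' hA' => le_antisymm (hcon A' hA') (hPnn a A')
    exact absurd (hA1i a b hba) (by rw [this]; exact lt_irrefl 0)
  have hbA₀ : b ∈ A₀ := (Finset.mem_filter.1 hA₀mem).2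
  have hA₀pow : A₀ ∈ (Finset.univ.erase a).powerset := (Finset.mem_filter.1 hA₀mem).1
  have hphi : 0 < phiQ μ (piStar π A₀ - π a) := by
    have h1 : 0 < phiQ μ (π b - π a) :=
      phiQ_pos h0 (by linarith) (hQ1b _ (by linarith))
    have h2 : phiQ μ (π b - π a) ≤ phiQ μ (piStar π A₀ - π a) :=
      phiQ_mono h0 (by have := le_piStar (π := π) hbA₀; linarith)
    linarith
  rw [gain_eq_phi]
  calc (0:ℝ) < P a A₀ * phiQ μ (piStar π A₀ - π a) := by positivity
    _ ≤ ∑ A' ∈ (Finset.univ.erase a).powerset, P a A' * phiQ μ (piStar π A' - π a) := by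
        refine Finset.single_le_sum
          (f := fun A' => P a A' * phiQ μ (piStar π A' - π a)) (fun A' _ => ?_) hA₀pow
        have := phiQ_nonneg (μ := μ) (piStar π A' - π a)
        have := hPnn a A'
        positivity

end GainLemmas

open Filter Topology

/-- In a statically stable game `F` (the restriction to the simplex of a `C¹` map `Φ`),
the aggregate net gain `G^F` has right derivative `Δx·DF(x)Δx + H^F(x) ≤ H^F(x) ≤ 0`
along the transition direction `Δx`, and the right derivative vanishes exactly at Nash
equilibria. -/
theorem stmt11 {A : Type*} [Fintype A] [DecidableEq A] [Nonempty A]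
    (P : A → Finset A → ℝ) (μQ : Measure ℝ) [IsProbabilityMeasure μQ]
    (hPnn : ∀ a A', 0 ≤ P a A')
    (hPsupp : ∀ a A', ¬ A' ⊆ Finset.univ.erase a → P a A' = 0)
    (hPempty : ∀ a, P a (∅ : Finset A) = 0)
    (hPsum : ∀ a, ∑ A' ∈ (Finset.univ.erase a).powerset, P a A' = 1)
    -- Assumption Q1
    (hQ1a : ∀ q : ℝ, q < 0 → Qfun μQ q = 0)
    (hQ1b : ∀ q : ℝ, 0 < q → 0 < Qfun μQ q)
    -- Assumption A1-i
    (hA1i : ∀ a b : A, b ≠ a →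
      0 < ∑ A' ∈ (Finset.univ.erase a).powerset.filter (fun A' => b ∈ A'), P a A')
    -- Assumption A1-ii
    (hA1ii : ∀ a b : A, ∀ S : Finset A, S ⊆ Finset.univ \ {a, b} →
      ∑ A' ∈ (Finset.univ.erase a).powerset.filter (fun A' => (A' ∩ S).Nonempty), P a A'
        = ∑ A' ∈ (Finset.univ.erase b).powerset.filter (fun A' => (A' ∩ S).Nonempty), P b A')
    -- the game: restriction to the simplex of a `C¹` map `Φ` on an open neighborhood `U`
    (U : Set (A → ℝ)) (hU : IsOpen U) (hΔU : stdSimplex ℝ A ⊆ U)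
    (Φ : (A → ℝ) → (A → ℝ)) (hΦ : ContDiffOn ℝ 1 Φ U)
    -- static stability: `z · DF(x) z ≤ 0` for all `x ∈ Δ^𝒜` and `z ∈ TΔ^𝒜`
    (hstable : ∀ x ∈ stdSimplex ℝ A, ∀ z : A → ℝ, ∑ a : A, z a = 0 →
      ∑ a : A, z a * (fderiv ℝ Φ x z) a ≤ 0)
    (x : A → ℝ) (hx : x ∈ stdSimplex ℝ A)
    -- the regularity condition at `(a, F(x))` for every `a`
    (hreg : ∀ a : A, ∀ A' ∈ (Finset.univ.erase a).powerset, A'.Nonempty → 0 < P a A' →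
      (bStar (Φ x) A').card = 1 ∧ μQ {piStar (Φ x) A' - Φ x a} = 0)
    (sel : A → Finset A → A)
    (hsel : ∀ a : A, ∀ A' ∈ (Finset.univ.erase a).powerset, A'.Nonempty →
      sel a A' ∈ bStar (Φ x) A') :
    HasDerivWithinAt
      (fun t : ℝ => Gagg P μQ (x + t • deltaX P μQ (Φ x) x sel)
        (Φ (x + t • deltaX P μQ (Φ x) x sel)))
      (∑ b : A, deltaX P μQ (Φ x) x sel b *
          (fderiv ℝ Φ x (deltaX P μQ (Φ x) x sel)) b
        + Hagg P μQ x (Φ x))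
      (Set.Ici (0 : ℝ)) 0 ∧
    (∑ b : A, deltaX P μQ (Φ x) x sel b *
          (fderiv ℝ Φ x (deltaX P μQ (Φ x) x sel)) b
        + Hagg P μQ x (Φ x)) ≤ Hagg P μQ x (Φ x) ∧
    Hagg P μQ x (Φ x) ≤ 0 ∧
    ((∑ b : A, deltaX P μQ (Φ x) x sel b *
          (fderiv ℝ Φ x (deltaX P μQ (Φ x) x sel)) b
        + Hagg P μQ x (Φ x)) = 0 ↔
      ∀ a : A, 0 < x a → Φ x a = Finset.univ.sup' Finset.univ_nonempty (Φ x)) := by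
  classical
  set π : A → ℝ := Φ x with hπdef
  set Δ : A → ℝ := deltaX P μQ π x sel with hΔdef
  -- μquébec has no mass below 0
  have hh0 : μQ (Set.Iio 0) = 0 := by
    have hcover : Set.Iio (0:ℝ) ⊆ ⋃ n : ℕ, Set.Iic (-(1 / (n + 1 : ℝ))) := by
      intro q hq
      rw [Set.mem_Iio] at hq
      obtain ⟨n, hn⟩ := exists_nat_one_div_lt (show (0:ℝ) < -q by linarith)
      exact Set.mem_iUnion.2 ⟨n, by simp only [Set.mem_Iic]; linarith⟩
    have hle := (measure_mono (μ := μQ) hcover).trans (measure_iUnion_le (μ := μQ) _)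
    have hz : ∀ n : ℕ, μQ (Set.Iic (-(1 / (n + 1 : ℝ)))) = 0 := by
      intro n
      refine measure_Iic_eq_zero (μ := μQ) (hQ1a _ ?_)
      have : (0:ℝ) < 1 / (n + 1 : ℝ) := by positivity
      linarith
    simp only [hz, tsum_zero, le_zero_iff] at hle
    exact hle
  -- swap lemma
  have hswap : ∀ f : A → ℝ, ∑ b : A, Δ b * f b
      = ∑ a : A, x a * ∑ A' ∈ (Finset.univ.erase a).powerset,
          P a A' * Qfun μQ (piStar π A' - π a) * (f (sel a A') - f a) := by
    intro f
    rw [hΔdef]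
    simp only [deltaX, Finset.sum_mul]
    rw [Finset.sum_comm]
    refine Finset.sum_congr rfl fun a _ => ?_
    simp only [mul_assoc]
    rw [← Finset.mul_sum]
    congr 1
    simp only [Finset.sum_mul]
    rw [Finset.sum_comm]
    refine Finset.sum_congr rfl fun A' _ => ?_
    simp only [mul_assoc]
    rw [← Finset.mul_sum]
    congr 1
    simp only [sub_mul, ite_mul, one_mul, zero_mul]
    rw [← Finset.mul_sum]
    congr 1
    rw [Finset.sum_sub_distrib, Finset.sum_ite_eq' Finset.univ (sel a A') f,
      Finset.sum_ite_eq' Finset.univ a f]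
    simp
  -- tangency
  have hsumΔ : ∑ b : A, Δ b = 0 := by
    have := hswap (fun _ => 1)
    simpa using this
  have hquad_le : ∑ b : A, Δ b * (fderiv ℝ Φ x Δ) b ≤ 0 := hstable x hx Δ hsumΔ
  -- termwise nonpositivity of second-order gains
  have hterm_nonpos : ∀ a : A, ∀ A' ∈ (Finset.univ.erase a).powerset,
      P a A' * Qfun μQ (piStar π A' - π a) * (gainMin P μQ π A' - gain P μQ π a) ≤ 0 := by
    intro a A' hA'
    rcases (hPnn a A').eq_or_lt with hP | hP
    · rw [← hP]; simp
    have hne : A'.Nonempty := by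
      rcases Finset.eq_empty_or_nonempty A' with rfl | h
      · rw [hPempty] at hP; exact absurd hP (lt_irrefl 0)
      · exact h
    rcases (Qfun_nonneg (μ := μQ) (piStar π A' - π a)).eq_or_lt with hQ | hQ
    · rw [← hQ]; simp
    have hge : π a ≤ piStar π A' := by
      by_contra hlt
      push_neg at hlt
      rw [hQ1a _ (by linarith)] at hQ
      exact lt_irrefl _ hQ
    obtain ⟨cm, hcm, hcmeq⟩ := Finset.exists_mem_eq_sup' hne π
    have hcmge : π a ≤ π cm := by
      rw [piStar_of_nonempty hne, hcmeq] at hge; exact hge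
    have h1 : gain P μQ π cm ≤ gain P μQ π a :=
      gain_mono hh0 hPnn hPsupp hPempty hPsum hA1ii π hcmge
    have h2 : gainMin P μQ π A' ≤ gain P μQ π cm := by
      rw [gainMin, dif_pos hne]
      exact Finset.inf'_le _ hcm
    have h3 : gainMin P μQ π A' - gain P μQ π a ≤ 0 := by linarith
    exact mul_nonpos_of_nonneg_of_nonpos (by positivity) h3
  have hg2_nonpos : ∀ a : A, gain2 P μQ π a ≤ 0 := fun a =>
    Finset.sum_nonpos (hterm_nonpos a)
  have hH_nonpos : Hagg P μQ x π ≤ 0 :=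
    Finset.sum_nonpos fun a _ => mul_nonpos_of_nonneg_of_nonpos (hx.1 a) (hg2_nonpos a)
  -- optimal selection minimizes the gain
  have hgsel : ∀ a : A, ∀ A' ∈ (Finset.univ.erase a).powerset, 0 < P a A' →
      gain P μQ π (sel a A') = gainMin P μQ π A' := by
    intro a A' hA' hP
    have hne : A'.Nonempty := by
      rcases Finset.eq_empty_or_nonempty A' with rfl | h
      · rw [hPempty] at hP; exact absurd hP (lt_irrefl 0)
      · exact h
    have hselm := hsel a A' hA' hne
    have hselA : sel a A' ∈ A' := Finset.filter_subset _ _ hselm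
    have hselmax : π (sel a A') = piStar π A' := (Finset.mem_filter.1 hselm).2
    rw [gainMin, dif_pos hne]
    refine le_antisymm ?_ (Finset.inf'_le _ hselA)
    refine Finset.le_inf' hne _ fun d hd => ?_
    refine gain_mono hh0 hPnn hPsupp hPempty hPsum hA1ii π ?_
    rw [hselmax]
    exact le_piStar hd
  -- first-order part of the derivative equals H
  have hΔg_eq_H : ∑ b : A, Δ b * gain P μQ π b = Hagg P μQ x π := by
    rw [hswap (fun b => gain P μQ π b), Hagg]
    refine Finset.sum_congr rfl fun a _ => ?_
    congr 1
    rw [gain2]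
    refine Finset.sum_congr rfl fun A' hA' => ?_
    rcases (hPnn a A').eq_or_lt with hP | hP
    · rw [← hP]; ring
    · rw [hgsel a A' hA' hP]
  -- differentiability of the payoff path
  have hΦdiff : HasFDerivAt Φ (fderiv ℝ Φ x) x :=
    ((hΦ.differentiableOn one_ne_zero).differentiableAt (hU.mem_nhds (hΔU hx))).hasFDerivAt
  have hy : HasDerivAt (fun t : ℝ => x + t • Δ) Δ 0 := by
    have h1 : HasDerivAt (fun t : ℝ => t • Δ) ((1:ℝ) • Δ) 0 := (hasDerivAt_id 0).smul_const Δ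
    simpa using h1.const_add x
  have hcomp : HasDerivAt (fun t : ℝ => Φ (x + t • Δ)) (fderiv ℝ Φ x Δ) 0 := by
    have hl : HasFDerivAt Φ (fderiv ℝ Φ x) ((fun t : ℝ => x + t • Δ) 0) := by
      simpa using hΦdiff
    exact hl.comp_hasDerivAt 0 hy
  have hcoord : ∀ d : A, HasDerivAt (fun t : ℝ => Φ (x + t • Δ) d) (fderiv ℝ Φ x Δ d) 0 := by
    intro d
    exact (ContinuousLinearMap.proj (R := ℝ) (φ := fun _ : A => ℝ) d).hasFDerivAt.comp_hasDerivAt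
      0 hcomp
  -- termwise derivative
  have hterm : ∀ a : A, ∀ A' ∈ (Finset.univ.erase a).powerset,
      HasDerivAt (fun t : ℝ => P a A' * phiQ μQ (piStar (Φ (x + t • Δ)) A' - Φ (x + t • Δ) a))
        (P a A' * (Qfun μQ (piStar π A' - π a)
          * (fderiv ℝ Φ x Δ (sel a A') - fderiv ℝ Φ x Δ a))) 0 := by
    intro a A' hA'
    rcases (hPnn a A').eq_or_lt with hP | hP
    · rw [← hP]
      simp only [zero_mul]
      exact hasDerivAt_const 0 0
    have hne : A'.Nonempty := by
      rcases Finset.eq_empty_or_nonempty A' with rfl | h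
      · rw [hPempty] at hP; exact absurd hP (lt_irrefl 0)
      · exact h
    obtain ⟨hcard, hatom⟩ := hreg a A' hA' hne hP
    have hselm := hsel a A' hA' hne
    have hselA : sel a A' ∈ A' := Finset.filter_subset _ _ hselm
    have hselmax : π (sel a A') = piStar π A' := (Finset.mem_filter.1 hselm).2
    have hstrict : ∀ d ∈ A', d ≠ sel a A' → π d < π (sel a A') := by
      intro d hd hne'
      rcases lt_or_eq_of_le (le_piStar (π := π) hd) with hlt | heq
      · rw [hselmax]; exact hlt
      · exfalso
        obtain ⟨u, hu⟩ := Finset.card_eq_one.1 hcard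
        have hdu : d ∈ bStar π A' := Finset.mem_filter.2 ⟨hd, heq⟩
        rw [hu, Finset.mem_singleton] at hdu hselm
        exact hne' (hdu.trans hselm.symm)
    have hev : (fun t : ℝ => Φ (x + t • Δ) (sel a A')) =ᶠ[𝓝 (0:ℝ)]
        (fun t => piStar (Φ (x + t • Δ)) A') := by
      have hevd : ∀ d ∈ A', ∀ᶠ t in 𝓝 (0:ℝ), Φ (x + t • Δ) d ≤ Φ (x + t • Δ) (sel a A') := by
        intro d hd
        by_cases hds : d = sel a A'
        · subst hds; exact Eventually.of_forall fun _ => le_rfl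
        · have hlt := hstrict d hd hds
          have hc : Tendsto (fun t : ℝ => Φ (x + t • Δ) (sel a A') - Φ (x + t • Δ) d)
              (𝓝 0) (𝓝 (Φ (x + (0:ℝ) • Δ) (sel a A') - Φ (x + (0:ℝ) • Δ) d)) :=
            ((hcoord _).continuousAt.sub (hcoord _).continuousAt)
          have h0' : (0:ℝ) < Φ (x + (0:ℝ) • Δ) (sel a A') - Φ (x + (0:ℝ) • Δ) d := by
            simp only [zero_smul, add_zero]
            have : π d < π (sel a A') := hlt
            rw [hπdef] at this
            linarith
          filter_upwards [hc.eventually (lt_mem_nhds h0')] with t ht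
          linarith
      have hall : ∀ᶠ t in 𝓝 (0:ℝ), ∀ d ∈ A', Φ (x + t • Δ) d ≤ Φ (x + t • Δ) (sel a A') := by
        rw [Finset.eventually_all]
        exact hevd
      filter_upwards [hall] with t ht
      exact (le_antisymm (piStar_le hne ht) (le_piStar hselA)).symm
    have hinner : HasDerivAt (fun t : ℝ => piStar (Φ (x + t • Δ)) A' - Φ (x + t • Δ) a)
        (fderiv ℝ Φ x Δ (sel a A') - fderiv ℝ Φ x Δ a) 0 :=
      ((hcoord (sel a A')).congr_of_eventuallyEq hev.symm).sub (hcoord a)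
    have houter : HasDerivAt (phiQ μQ) (Qfun μQ (piStar π A' - π a))
        ((fun t : ℝ => piStar (Φ (x + t • Δ)) A' - Φ (x + t • Δ) a) 0) := by
      have hc0 : (fun t : ℝ => piStar (Φ (x + t • Δ)) A' - Φ (x + t • Δ) a) 0
          = piStar π A' - π a := by
        simp only [zero_smul, add_zero, hπdef]
      rw [hc0]
      exact hasDerivAt_phiQ hh0 hatom
    have := (houter.comp 0 hinner).const_mul (P a A')
    simpa [Function.comp] using this
  -- the derivative of the aggregate gain
  have hG : HasDerivAt (fun t : ℝ => Gagg P μQ (x + t • Δ) (Φ (x + t • Δ)))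
      (∑ a : A, (Δ a * gain P μQ π a + x a * ∑ A' ∈ (Finset.univ.erase a).powerset,
        P a A' * (Qfun μQ (piStar π A' - π a)
          * (fderiv ℝ Φ x Δ (sel a A') - fderiv ℝ Φ x Δ a)))) 0 := by
    have hsummand : ∀ a : A, HasDerivAt
        (fun t : ℝ => (x + t • Δ) a * gain P μQ (Φ (x + t • Δ)) a)
        (Δ a * gain P μQ π a + x a * ∑ A' ∈ (Finset.univ.erase a).powerset,
          P a A' * (Qfun μQ (piStar π A' - π a)
            * (fderiv ℝ Φ x Δ (sel a A') - fderiv ℝ Φ x Δ a))) 0 := by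
      intro a
      have h1 : HasDerivAt (fun t : ℝ => (x + t • Δ) a) (Δ a) 0 := by
        have := ((hasDerivAt_id (0:ℝ)).mul_const (Δ a)).const_add (x a)
        simpa using this
      have h2 : HasDerivAt (fun t : ℝ => gain P μQ (Φ (x + t • Δ)) a)
          (∑ A' ∈ (Finset.univ.erase a).powerset,
            P a A' * (Qfun μQ (piStar π A' - π a)
              * (fderiv ℝ Φ x Δ (sel a A') - fderiv ℝ Φ x Δ a))) 0 :=
        HasDerivAt.fun_sum fun A' hA' => hterm a A' hA'
      have := h1.mul h2
      simp only [Pi.add_apply, Pi.smul_apply, smul_eq_mul, zero_mul, add_zero, zero_smul,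
        Pi.zero_apply, hπdef] at this ⊢
      exact this
    exact HasDerivAt.fun_sum fun a _ => hsummand a
  -- identify the derivative value
  have h2nd : ∑ a : A, x a * ∑ A' ∈ (Finset.univ.erase a).powerset,
        P a A' * (Qfun μQ (piStar π A' - π a)
          * (fderiv ℝ Φ x Δ (sel a A') - fderiv ℝ Φ x Δ a))
      = ∑ b : A, Δ b * (fderiv ℝ Φ x Δ) b := by
    rw [hswap (fun b => fderiv ℝ Φ x Δ b)]
    simp only [mul_assoc]
  have hval : (∑ a : A, (Δ a * gain P μQ π a + x a * ∑ A' ∈ (Finset.univ.erase a).powerset,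
        P a A' * (Qfun μQ (piStar π A' - π a)
          * (fderiv ℝ Φ x Δ (sel a A') - fderiv ℝ Φ x Δ a))))
      = (∑ b : A, Δ b * (fderiv ℝ Φ x Δ) b) + Hagg P μQ x π := by
    rw [Finset.sum_add_distrib, hΔg_eq_H, h2nd, add_comm]
  refine ⟨?_, by linarith, hH_nonpos, ?_⟩
  · exact hval ▸ hG.hasDerivWithinAt
  constructor
  · -- derivative zero → Nash equilibrium
    intro h a hxa
    by_contra hne'
    obtain ⟨bm, _, hbmeq⟩ := Finset.exists_mem_eq_sup' Finset.univ_nonempty π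
    have haM : π a < π bm := by
      rw [← hbmeq]
      rcases lt_or_eq_of_le (Finset.le_sup' π (Finset.mem_univ a)) with hlt | heq
      · exact hlt
      · exact absurd heq hne'
    have hbma : bm ≠ a := fun hba => lt_irrefl _ (hba ▸ haM)
    obtain ⟨A₀, hA₀f, hA₀pos⟩ : ∃ A₀ ∈ (Finset.univ.erase a).powerset.filter
        (fun A' => bm ∈ A'), 0 < P a A₀ := by
      by_contra hcon
      push_neg at hcon
      have : ∑ A' ∈ (Finset.univ.erase a).powerset.filter (fun A' => bm ∈ A'), P a A' = 0 :=
        Finset.sum_eq_zero fun A' hA' => le_antisymm (hcon A' hA') (hPnn a A')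
      exact absurd (hA1i a bm hbma) (by rw [this]; exact lt_irrefl 0)
    have hbmA₀ : bm ∈ A₀ := (Finset.mem_filter.1 hA₀f).2
    have hA₀pow : A₀ ∈ (Finset.univ.erase a).powerset := (Finset.mem_filter.1 hA₀f).1
    have hA₀ne : A₀.Nonempty := ⟨bm, hbmA₀⟩
    have hstar : piStar π A₀ = π bm := by
      refine le_antisymm (piStar_le hA₀ne fun d _ => ?_) (le_piStar hbmA₀)
      exact hbmeq ▸ Finset.le_sup' π (Finset.mem_univ d)
    have hQpos : 0 < Qfun μQ (piStar π A₀ - π a) := hQ1b _ (by rw [hstar]; linarith)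
    obtain ⟨cm, hcm, hcmeq⟩ := Finset.exists_mem_eq_sup' hA₀ne π
    have hcmmax : ∀ d, π d ≤ π cm := by
      intro d
      have h1 : π d ≤ π bm := hbmeq ▸ Finset.le_sup' π (Finset.mem_univ d)
      have h2 : π cm = piStar π A₀ := by rw [piStar_of_nonempty hA₀ne, hcmeq]
      have h3 : π bm ≤ piStar π A₀ := le_piStar hbmA₀
      linarith
    have hgcm : gain P μQ π cm = 0 := gain_zero_of_max hh0 hPempty π hcmmax
    have hgmin : gainMin P μQ π A₀ ≤ 0 := by
      rw [gainMin, dif_pos hA₀ne]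
      exact (Finset.inf'_le _ hcm).trans (le_of_eq hgcm)
    have hga : 0 < gain P μQ π a := gain_pos hh0 hPnn hQ1b hA1i π (a := a) (b := bm) haM
    have htermneg : P a A₀ * Qfun μQ (piStar π A₀ - π a)
        * (gainMin P μQ π A₀ - gain P μQ π a) < 0 :=
      mul_neg_of_pos_of_neg (by positivity) (by linarith)
    have hg2a : gain2 P μQ π a < 0 := by
      rw [gain2, ← Finset.add_sum_erase _ _ hA₀pow]
      have hrest : ∑ A' ∈ ((Finset.univ.erase a).powerset).erase A₀,
          P a A' * Qfun μQ (piStar π A' - π a)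
            * (gainMin P μQ π A' - gain P μQ π a) ≤ 0 :=
        Finset.sum_nonpos fun A' hA' =>
          hterm_nonpos a A' (Finset.mem_of_mem_erase hA')
      linarith
    have hH_lt : Hagg P μQ x π < 0 := by
      rw [Hagg, ← Finset.add_sum_erase _ _ (Finset.mem_univ a)]
      have hrest : ∑ a' ∈ Finset.univ.erase a, x a' * gain2 P μQ π a' ≤ 0 :=
        Finset.sum_nonpos fun a' _ =>
          mul_nonpos_of_nonneg_of_nonpos (hx.1 a') (hg2_nonpos a')
      nlinarith
    linarith
  · -- Nash equilibrium → derivative zero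
    intro hNE
    have hQzero : ∀ a : A, 0 < x a → ∀ A' ∈ (Finset.univ.erase a).powerset, 0 < P a A' →
        Qfun μQ (piStar π A' - π a) = 0 := by
      intro a hxa A' hA' hP
      have hne : A'.Nonempty := by
        rcases Finset.eq_empty_or_nonempty A' with rfl | h
        · rw [hPempty] at hP; exact absurd hP (lt_irrefl 0)
        · exact h
      have hMa : π a = Finset.univ.sup' Finset.univ_nonempty π := hNE a hxa
      have hle : piStar π A' ≤ π a := by
        rw [hMa]
        exact piStar_le hne fun d _ => Finset.le_sup' π (Finset.mem_univ d)
      rcases lt_or_eq_of_le hle with hlt | heq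
      · exact hQ1a _ (by linarith)
      · have hatom := (hreg a A' hA' hne hP).2
        have hIic : μQ (Set.Iic (piStar π A' - π a)) = 0 := by
          have hsplit : Set.Iic (piStar π A' - π a)
              = Set.Iio (piStar π A' - π a) ∪ {piStar π A' - π a} :=
            (Set.Iio_union_right).symm
          have hIio : Set.Iio (piStar π A' - π a) = Set.Iio 0 := by
            rw [heq, sub_self]
          refine le_antisymm ?_ zero_le
          calc μQ (Set.Iic (piStar π A' - π a))
              ≤ μQ (Set.Iio (piStar π A' - π a)) + μQ {piStar π A' - π a} := by
                rw [hsplit]; exact measure_union_le _ _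
            _ = 0 := by rw [hIio, hh0, hatom, add_zero]
        rw [Qfun, hIic, ENNReal.toReal_zero]
    have hΔb : ∀ b : A, Δ b = 0 := by
      intro b
      rw [hΔdef]
      show (∑ a : A, x a * (∑ A' ∈ (Finset.univ.erase a).powerset,
        P a A' * Qfun μQ (piStar π A' - π a)
          * ((if b = sel a A' then (1:ℝ) else 0) - (if b = a then (1:ℝ) else 0)))) = 0
      refine Finset.sum_eq_zero fun a _ => ?_
      rcases (hx.1 a).eq_or_lt with hxa | hxa
      · rw [← hxa, zero_mul]
      · rw [mul_eq_zero]
        right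
        refine Finset.sum_eq_zero fun A' hA' => ?_
        rcases (hPnn a A').eq_or_lt with hP | hP
        · rw [← hP]; ring
        · rw [hQzero a hxa A' hA' hP]; ring
    have hH0 : Hagg P μQ x π = 0 := by
      rw [Hagg]
      refine Finset.sum_eq_zero fun a _ => ?_
      rcases (hx.1 a).eq_or_lt with hxa | hxa
      · rw [← hxa, zero_mul]
      · rw [mul_eq_zero]
        right
        rw [gain2]
        refine Finset.sum_eq_zero fun A' hA' => ?_
        rcases (hPnn a A').eq_or_lt with hP | hP
        · rw [← hP]; ring
        · rw [hQzero a hxa A' hA' hP]; ring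
    have hq0 : ∑ b : A, Δ b * (fderiv ℝ Φ x Δ) b = 0 :=
      Finset.sum_eq_zero fun b _ => by rw [hΔb b, zero_mul]
    rw [hq0, hH0, add_zero]
end

section
/- Let 𝒳 be a compact metric space, X* ⊆ 𝒳 nonempty and closed, and X' an open neighborhood of X* with X' ≠ 𝒳. Let W : 𝒳 → ℝ be continuous with W(x) ≥ 0 for all x ∈ cl X' and {x ∈ cl X' : W(x) = 0} = X*. Then there exists an open neighborhood X'' of X* with X'' ⊆ X' such that the following holds: every continuous path x : [0,∞) → 𝒳 with x_0 ∈ X'' and with the property that, for every t ≥ 0, if x_τ ∈ X' for all τ ∈ [0, t) then W(x_t) ≤ W(x_0), satisfies x_t ∈ X'' for all t ≥ 0 (i.e., X'' is forward invariant for all such paths). -/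
/-- If a continuous path starting in the open set `X'` ever leaves `X'`, then there is a
first exit time `t0 > 0`, at which the path is in `closure X' \ X'`, having been in `X'`
before. -/
lemma stmt13_exit {X : Type*} [MetricSpace X] (X' : Set X) (hX'open : IsOpen X')
    (x : ℝ → X) (hx : ContinuousOn x (Set.Ici 0)) (hx0 : x 0 ∈ X')
    (t : ℝ) (ht : 0 ≤ t) (hne : x t ∉ X') :
    ∃ t0 : ℝ, 0 < t0 ∧ x t0 ∈ closure X' \ X' ∧ ∀ τ ∈ Set.Ico (0 : ℝ) t0, x τ ∈ X' := by
  set B : Set ℝ := Set.Ici 0 ∩ x ⁻¹' X'ᶜ with hB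
  have hBclosed : IsClosed B := hx.preimage_isClosed_of_isClosed isClosed_Ici
    hX'open.isClosed_compl
  have hBne : B.Nonempty := ⟨t, ht, hne⟩
  have hBbdd : BddBelow B := ⟨0, fun s hs => hs.1⟩
  set t0 := sInf B with ht0def
  have ht0mem : t0 ∈ B := hBclosed.csInf_mem hBne hBbdd
  have ht0nn : 0 ≤ t0 := ht0mem.1
  have ht0not : x t0 ∉ X' := ht0mem.2
  have hbefore : ∀ τ ∈ Set.Ico (0 : ℝ) t0, x τ ∈ X' := by
    intro τ ⟨hτ0, hτlt⟩
    by_contra h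
    exact absurd (csInf_le hBbdd ⟨hτ0, h⟩) (not_le.mpr hτlt)
  have ht0pos : 0 < t0 := lt_of_le_of_ne ht0nn (fun heq => ht0not (heq ▸ hx0))
  refine ⟨t0, ht0pos, ⟨?_, ht0not⟩, hbefore⟩
  -- x t0 is in the closure of X' since it's a limit of points x τ, τ ∈ [0, t0)
  have hcwa : ContinuousWithinAt x (Set.Ico 0 t0) t0 :=
    (hx t0 ht0nn).mono Set.Ico_subset_Ici_self
  have hclmem : t0 ∈ closure (Set.Ico (0 : ℝ) t0) := by
    rw [closure_Ico (ne_of_lt ht0pos)]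
    exact ⟨ht0nn, le_refl t0⟩
  have := hcwa.mem_closure_image hclmem
  refine closure_mono ?_ this
  rintro y ⟨τ, hτ, rfl⟩
  exact hbefore τ hτ

/-- Given a compact metric space `𝒳`, a nonempty closed set `X*`, a proper open
neighborhood `X'` of `X*`, and a continuous function `W` that is nonnegative on
`cl X'` and vanishes on `cl X'` exactly on `X*`, there is a smaller open
neighborhood `X''` of `X*` inside `X'` that is forward invariant for every
continuous path that starts in `X''` and does not increase `W` as long as it
has stayed in `X'`. -/
theorem stmt13 {X : Type*} [MetricSpace X] [CompactSpace X]
    (Xstar : Set X) (hXne : Xstar.Nonempty) (hXcl : IsClosed Xstar)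
    (X' : Set X) (hX'open : IsOpen X') (hX'nbhd : Xstar ⊆ X') (hX'ne : X' ≠ Set.univ)
    (W : X → ℝ) (hWcont : Continuous W)
    (hWnn : ∀ x ∈ closure X', 0 ≤ W x)
    (hWzero : {x ∈ closure X' | W x = 0} = Xstar) :
    ∃ X'' : Set X, IsOpen X'' ∧ Xstar ⊆ X'' ∧ X'' ⊆ X' ∧
      ∀ x : ℝ → X, ContinuousOn x (Set.Ici 0) → x 0 ∈ X'' →
        (∀ t : ℝ, 0 ≤ t → (∀ τ ∈ Set.Ico (0 : ℝ) t, x τ ∈ X') → W (x t) ≤ W (x 0)) →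
        ∀ t : ℝ, 0 ≤ t → x t ∈ X'' := by
  have hXsub : ∀ y ∈ Xstar, y ∈ closure X' ∧ W y = 0 := by
    intro y hy
    have : y ∈ {x ∈ closure X' | W x = 0} := hWzero ▸ hy
    exact this
  by_cases hC : (closure X' \ X').Nonempty
  · -- The boundary-ish set is nonempty; W attains a positive minimum c on it.
    have hCcl : IsClosed (closure X' \ X') := isClosed_closure.sdiff hX'open
    obtain ⟨m, hm, hmin⟩ := hCcl.isCompact.exists_isMinOn hC hWcont.continuousOn
    have hmpos : 0 < W m := by
      rcases lt_or_eq_of_le (hWnn m hm.1) with h | h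
      · exact h
      · exact absurd (hWzero ▸ (⟨hm.1, h.symm⟩ : m ∈ {x ∈ closure X' | W x = 0}))
          (fun hmem => hm.2 (hX'nbhd hmem))
    refine ⟨X' ∩ W ⁻¹' Set.Iio (W m), hX'open.inter (isOpen_Iio.preimage hWcont),
      fun y hy => ⟨hX'nbhd hy, by simpa [(hXsub y hy).2] using hmpos⟩,
      Set.inter_subset_left, ?_⟩
    intro x hx hx0 hmono t ht
    -- First: the path stays in X' forever.
    have hstay : ∀ s : ℝ, 0 ≤ s → x s ∈ X' := by
      intro s hs
      by_contra h
      obtain ⟨t0, ht0pos, ⟨ht0cl, ht0not⟩, hbefore⟩ :=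
        stmt13_exit X' hX'open x hx hx0.1 s hs h
      have h1 : W (x t0) ≤ W (x 0) := hmono t0 ht0pos.le hbefore
      have h2 : W m ≤ W (x t0) := hmin ⟨ht0cl, ht0not⟩
      exact absurd hx0.2 (not_lt.mpr (h2.trans h1))
    refine ⟨hstay t ht, ?_⟩
    have : W (x t) ≤ W (x 0) := hmono t ht (fun τ hτ => hstay τ hτ.1)
    exact lt_of_le_of_lt this hx0.2
  · -- closure X' ⊆ X' : X' is clopen, take X'' = X'.
    have hsub : closure X' ⊆ X' := by
      intro y hy
      by_contra h
      exact hC ⟨y, hy, h⟩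
    refine ⟨X', hX'open, hX'nbhd, le_refl _, ?_⟩
    intro x hx hx0 _ t ht
    by_contra h
    obtain ⟨t0, _, ⟨ht0cl, ht0not⟩, _⟩ := stmt13_exit X' hX'open x hx hx0 t ht h
    exact ht0not (hsub ht0cl)
end

section
/- Assume Q1, A1-i and A1-ii, and let F : Δ^𝒜 → ℝ^𝒜 be a continuous population game. If x* ∈ NE(F), then G^F(x*) = 0 and H^F(x*) = 0. Moreover, if x : [0,∞) → Δ^𝒜 is a continuous path with x_0 = x* such that t ↦ G^F(x_t) has a strictly positive right derivative at t = 0, then there exists T > 0 with x_t ∉ NE(F) for all t ∈ (0, T]. -/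
open MeasureTheory Finset
open scoped Classical

/-- The set of Nash equilibria of a population game `F`. -/
def NashSet {A : Type*} [Fintype A] [Nonempty A]
    (F : (A → ℝ) → (A → ℝ)) : Set (A → ℝ) :=
  {y | y ∈ stdSimplex ℝ A ∧
    ∀ a : A, 0 < y a → F y a = Finset.univ.sup' Finset.univ_nonempty (F y)}

lemma ae_nonneg_of_Q1 (μQ : Measure ℝ) [IsProbabilityMeasure μQ]
    (hQ1a : ∀ q : ℝ, q < 0 → Qfun μQ q = 0) : ∀ᵐ q ∂μQ, 0 ≤ q := by
  have h0 : ∀ q : ℝ, q < 0 → μQ (Set.Iic q) = 0 := by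
    intro q hq
    have := hQ1a q hq
    rwa [Qfun, ENNReal.toReal_eq_zero_iff, or_iff_left (measure_ne_top μQ _)] at this
  have hsub : Set.Iio (0:ℝ) ⊆ ⋃ n : ℕ, Set.Iic (-(1 / (n+1) : ℝ)) := by
    intro q hq
    simp only [Set.mem_Iio] at hq
    obtain ⟨n, hn⟩ := exists_nat_one_div_lt (show (0:ℝ) < -q by linarith)
    exact Set.mem_iUnion.2 ⟨n, by simp only [Set.mem_Iic]; linarith⟩
  have : μQ (Set.Iio 0) = 0 := by
    refine measure_mono_null hsub (measure_iUnion_null fun n => h0 _ ?_)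
    have : (0:ℝ) < 1 / (n+1) := by positivity
    linarith
  filter_upwards [measure_eq_zero_iff_ae_notMem.mp this] with q hq
  simpa using hq

lemma gain_nonneg {A : Type*} [Fintype A] [DecidableEq A]
    (P : A → Finset A → ℝ) (μQ : Measure ℝ) (hPnn : ∀ a A', 0 ≤ P a A')
    (π : A → ℝ) (a : A) : 0 ≤ gain P μQ π a := by
  refine Finset.sum_nonneg fun A' _ => mul_nonneg (hPnn a A') ?_
  exact integral_nonneg fun q => le_max_right _ _

lemma gain_eq_zero_of_max {A : Type*} [Fintype A] [DecidableEq A]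
    (P : A → Finset A → ℝ) (μQ : Measure ℝ) [IsProbabilityMeasure μQ]
    (hPempty : ∀ a, P a (∅ : Finset A) = 0)
    (hQ1a : ∀ q : ℝ, q < 0 → Qfun μQ q = 0)
    (π : A → ℝ) (a : A) (hmax : ∀ b, π b ≤ π a) : gain P μQ π a = 0 := by
  refine Finset.sum_eq_zero fun A' _ => ?_
  rcases A'.eq_empty_or_nonempty with rfl | hA'
  · simp [hPempty]
  · have hle : piStar π A' - π a ≤ 0 := by
      rw [piStar, dif_pos hA']
      have := Finset.sup'_le hA' π fun b _ => hmax b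
      linarith
    have hz : (fun q => max (piStar π A' - π a - q) 0) =ᵐ[μQ] fun _ => (0:ℝ) := by
      filter_upwards [ae_nonneg_of_Q1 μQ hQ1a] with q hq
      have h2 : piStar π A' - π a - q ≤ 0 := by linarith
      exact max_eq_right h2
    rw [integral_congr_ae hz, integral_zero, mul_zero]

lemma gainMin_eq_zero_of_max {A : Type*} [Fintype A] [DecidableEq A]
    (P : A → Finset A → ℝ) (μQ : Measure ℝ) [IsProbabilityMeasure μQ]
    (hPnn : ∀ a A', 0 ≤ P a A')
    (hPempty : ∀ a, P a (∅ : Finset A) = 0)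
    (hQ1a : ∀ q : ℝ, q < 0 → Qfun μQ q = 0)
    (π : A → ℝ) (A' : Finset A) (hA' : A'.Nonempty)
    (b : A) (hb : b ∈ A') (hmax : ∀ c, π c ≤ π b) :
    gainMin P μQ π A' = 0 := by
  rw [gainMin, dif_pos hA']
  refine le_antisymm ?_ ?_
  · calc A'.inf' hA' (fun c => gain P μQ π c) ≤ gain P μQ π b := Finset.inf'_le _ hb
      _ = 0 := gain_eq_zero_of_max P μQ hPempty hQ1a π b hmax
  · exact Finset.le_inf' hA' _ fun c _ => gain_nonneg P μQ hPnn π c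

lemma gain2_eq_zero_of_max {A : Type*} [Fintype A] [DecidableEq A]
    (P : A → Finset A → ℝ) (μQ : Measure ℝ) [IsProbabilityMeasure μQ]
    (hPnn : ∀ a A', 0 ≤ P a A')
    (hPempty : ∀ a, P a (∅ : Finset A) = 0)
    (hQ1a : ∀ q : ℝ, q < 0 → Qfun μQ q = 0)
    (π : A → ℝ) (a : A) (hmax : ∀ b, π b ≤ π a) : gain2 P μQ π a = 0 := by
  refine Finset.sum_eq_zero fun A' _ => ?_
  rcases A'.eq_empty_or_nonempty with rfl | hA'
  · simp [hPempty]
  · rcases lt_or_eq_of_le (show piStar π A' ≤ π a by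
      rw [piStar, dif_pos hA']
      exact Finset.sup'_le hA' π fun b _ => hmax b) with hlt | heq
    · rw [hQ1a _ (by linarith), mul_zero, zero_mul]
    · obtain ⟨b, hb, hbe⟩ := Finset.exists_mem_eq_sup' hA' π
      have hbmax : ∀ c, π c ≤ π b := by
        intro c
        have : π b = π a := by rw [← heq, piStar, dif_pos hA', hbe]
        rw [this]; exact hmax c
      rw [gainMin_eq_zero_of_max P μQ hPnn hPempty hQ1a π A' hA' b hb hbmax,
        gain_eq_zero_of_max P μQ hPempty hQ1a π a hmax, sub_zero, mul_zero]

lemma Gagg_zero_of_nash {A : Type*} [Fintype A] [DecidableEq A] [Nonempty A]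
    (P : A → Finset A → ℝ) (μQ : Measure ℝ) [IsProbabilityMeasure μQ]
    (hPempty : ∀ a, P a (∅ : Finset A) = 0)
    (hQ1a : ∀ q : ℝ, q < 0 → Qfun μQ q = 0)
    (F : (A → ℝ) → (A → ℝ)) (y : A → ℝ) (hy : y ∈ NashSet F) :
    Gagg P μQ y (F y) = 0 := by
  refine Finset.sum_eq_zero fun a _ => ?_
  rcases eq_or_lt_of_le (hy.1.1 a) with h0 | hpos
  · rw [← h0, zero_mul]
  · have hmax : ∀ b, F y b ≤ F y a := by
      intro b
      rw [hy.2 a hpos]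
      exact Finset.le_sup' (F y) (Finset.mem_univ b)
    rw [gain_eq_zero_of_max P μQ hPempty hQ1a (F y) a hmax, mul_zero]

/-- At a Nash equilibrium, `G^F = 0` and `H^F = 0`; and if a path starting at a Nash
equilibrium has a strictly positive right derivative of `G^F` at time `0`, then the
path stays away from the Nash equilibrium set on some interval `(0, T]`. -/
theorem stmt15 {A : Type*} [Fintype A] [DecidableEq A] [Nonempty A]
    (P : A → Finset A → ℝ) (μQ : Measure ℝ) [IsProbabilityMeasure μQ]
    (hPnn : ∀ a A', 0 ≤ P a A')
    (hPsupp : ∀ a A', ¬ A' ⊆ Finset.univ.erase a → P a A' = 0)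
    (hPempty : ∀ a, P a (∅ : Finset A) = 0)
    (hPsum : ∀ a, ∑ A' ∈ (Finset.univ.erase a).powerset, P a A' = 1)
    -- Assumption Q1
    (hQ1a : ∀ q : ℝ, q < 0 → Qfun μQ q = 0)
    (hQ1b : ∀ q : ℝ, 0 < q → 0 < Qfun μQ q)
    -- Assumption A1-i
    (hA1i : ∀ a b : A, b ≠ a →
      0 < ∑ A' ∈ (Finset.univ.erase a).powerset.filter (fun A' => b ∈ A'), P a A')
    -- Assumption A1-ii
    (hA1ii : ∀ a b : A, ∀ S : Finset A, S ⊆ Finset.univ \ {a, b} →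
      ∑ A' ∈ (Finset.univ.erase a).powerset.filter (fun A' => (A' ∩ S).Nonempty), P a A'
        = ∑ A' ∈ (Finset.univ.erase b).powerset.filter (fun A' => (A' ∩ S).Nonempty), P b A')
    -- a continuous population game
    (F : (A → ℝ) → (A → ℝ)) (hFcont : ContinuousOn F (stdSimplex ℝ A))
    (xstar : A → ℝ) (hxstar : xstar ∈ NashSet F) :
    Gagg P μQ xstar (F xstar) = 0 ∧
    Hagg P μQ xstar (F xstar) = 0 ∧
    ∀ x : ℝ → A → ℝ, ContinuousOn x (Set.Ici 0) →
      (∀ t : ℝ, 0 ≤ t → x t ∈ stdSimplex ℝ A) → x 0 = xstar →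
      ∀ v : ℝ, 0 < v →
        HasDerivWithinAt (fun t => Gagg P μQ (x t) (F (x t))) v (Set.Ici 0) 0 →
        ∃ T : ℝ, 0 < T ∧ ∀ t ∈ Set.Ioc (0 : ℝ) T, x t ∉ NashSet F := by
  have hG : ∀ y ∈ NashSet F, Gagg P μQ y (F y) = 0 :=
    fun y hy => Gagg_zero_of_nash P μQ hPempty hQ1a F y hy
  refine ⟨hG xstar hxstar, ?_, ?_⟩
  · refine Finset.sum_eq_zero fun a _ => ?_
    rcases eq_or_lt_of_le (hxstar.1.1 a) with h0 | hpos
    · rw [← h0, zero_mul]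
    · have hmax : ∀ b, F xstar b ≤ F xstar a := by
        intro b
        rw [hxstar.2 a hpos]
        exact Finset.le_sup' (F xstar) (Finset.mem_univ b)
      rw [gain2_eq_zero_of_max P μQ hPnn hPempty hQ1a (F xstar) a hmax, mul_zero]
  · intro x _hxc _hxs hx0 v hv hd
    set f : ℝ → ℝ := fun t => Gagg P μQ (x t) (F (x t)) with hf
    have hf0 : f 0 = 0 := by
      simp only [hf, hx0]
      exact hG xstar hxstar
    have hslope : Filter.Tendsto (slope f 0) (nhdsWithin 0 (Set.Ici 0 \ {0})) (nhds v) :=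
      hasDerivWithinAt_iff_tendsto_slope.mp hd
    have hset : Set.Ici (0:ℝ) \ {0} = Set.Ioi 0 := by
      ext t
      simp only [Set.mem_diff, Set.mem_Ici, Set.mem_singleton_iff, Set.mem_Ioi]
      constructor
      · rintro ⟨h1, h2⟩; exact lt_of_le_of_ne h1 (Ne.symm h2)
      · intro h; exact ⟨le_of_lt h, ne_of_gt h⟩
    rw [hset] at hslope
    have hev : ∀ᶠ t in nhdsWithin 0 (Set.Ioi 0), 0 < slope f 0 t :=
      hslope.eventually (eventually_gt_nhds hv)
    obtain ⟨T, hT, hTsub⟩ := mem_nhdsGT_iff_exists_Ioc_subset.mp hev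
    refine ⟨T, hT, fun t ht hmem => ?_⟩
    have htpos : 0 < t := ht.1
    have hfpos : 0 < f t := by
      have h : 0 < slope f 0 t := hTsub ht
      rw [slope_def_field, hf0, sub_zero, sub_zero] at h
      exact (div_pos_iff.mp h).resolve_right (fun ⟨_, h2⟩ => absurd htpos (not_lt.mpr h2.le)) |>.1
    exact absurd (hG (x t) hmem) (ne_of_gt hfpos)
end

section
/- (Stationarity is equivalent to Nash equilibrium) Assume Q1 and A1-i. For every x ∈ Δ^𝒜 and every π ∈ ℝ^𝒜, one has 0 ∈ V(x)[π] if and only if every a ∈ 𝒜 with x_a > 0 satisfies π_a = max_{b∈𝒜} π_b. In particular, for any population game F, 0 ∈ V(x)[F(x)] if and only if x ∈ NE(F). -/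
open MeasureTheory Finset
open scoped Classical

/-- `Q₋(q) = μ_Q((-∞, q))`. -/
noncomputable def Qminus (μQ : Measure ℝ) (q : ℝ) : ℝ := (μQ (Set.Iio q)).toReal

/-- `z` is an admissible transition vector for `a` at `π`. -/
def IsAdmissible {A : Type*} [Fintype A] [DecidableEq A]
    (P : A → Finset A → ℝ) (μQ : Measure ℝ) (π : A → ℝ) (a : A) (z : A → ℝ) : Prop :=
  ∃ (y : Finset A → A → ℝ) (ρ : Finset A → ℝ),
    (∀ A' ∈ (Finset.univ.erase a).powerset, A'.Nonempty →
      y A' ∈ stdSimplex ℝ A ∧ (∀ b, y A' b ≠ 0 → b ∈ bStar π A') ∧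
      ρ A' ∈ Set.Icc (Qminus μQ (piStar π A' - π a)) (Qfun μQ (piStar π A' - π a))) ∧
    z = fun b => ∑ A' ∈ (Finset.univ.erase a).powerset,
      P a A' * ρ A' * (y A' b - (if b = a then (1 : ℝ) else 0))

/-- The evolutionary dynamic: the set `V(x)[π]` of feasible transition vectors. -/
def Vset {A : Type*} [Fintype A] [DecidableEq A]
    (P : A → Finset A → ℝ) (μQ : Measure ℝ) (x π : A → ℝ) : Set (A → ℝ) :=
  {Δx | ∃ z : A → A → ℝ, (∀ a, IsAdmissible P μQ π a (z a)) ∧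
    Δx = fun b => ∑ a : A, x a * z a b}

lemma Qfun_nonneg_s16 (μQ : Measure ℝ) (q : ℝ) : 0 ≤ Qfun μQ q := ENNReal.toReal_nonneg
lemma Qminus_nonneg (μQ : Measure ℝ) (q : ℝ) : 0 ≤ Qminus μQ q := ENNReal.toReal_nonneg

lemma Qminus_le_Qfun (μQ : Measure ℝ) [IsProbabilityMeasure μQ] (q : ℝ) :
    Qminus μQ q ≤ Qfun μQ q :=
  ENNReal.toReal_mono (measure_ne_top _ _) (measure_mono Set.Iio_subset_Iic_self)

lemma Qfun_le_Qminus (μQ : Measure ℝ) [IsProbabilityMeasure μQ] {q q' : ℝ} (h : q' < q) :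
    Qfun μQ q' ≤ Qminus μQ q :=
  ENNReal.toReal_mono (measure_ne_top _ _) (measure_mono (fun t ht => lt_of_le_of_lt ht h))

lemma Qminus_eq_zero (μQ : Measure ℝ) [IsProbabilityMeasure μQ]
    (hQ1a : ∀ q : ℝ, q < 0 → Qfun μQ q = 0) {q : ℝ} (hq : q ≤ 0) : Qminus μQ q = 0 := by
  have h0 : μQ (Set.Iio (0:ℝ)) = 0 := by
    have hsub : Set.Iio (0:ℝ) ⊆ ⋃ n : ℕ, Set.Iic (-(1/(n+1))) := by
      intro t ht
      obtain ⟨n, hn⟩ := exists_nat_one_div_lt (show (0:ℝ) < -t by linarith [Set.mem_Iio.1 ht])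
      exact Set.mem_iUnion.2 ⟨n, by simp only [Set.mem_Iic]; linarith⟩
    refine measure_mono_null hsub (measure_iUnion_null fun n => ?_)
    have hpos : (0:ℝ) < 1/((n:ℝ)+1) := by positivity
    have hlt : -(1/((n:ℝ)+1)) < 0 := by linarith
    have := hQ1a _ hlt
    rw [Qfun, ENNReal.toReal_eq_zero_iff] at this
    exact this.resolve_right (measure_ne_top _ _)
  have : μQ (Set.Iio q) = 0 := measure_mono_null (Set.Iio_subset_Iio hq) h0
  rw [Qminus, this, ENNReal.toReal_zero]

lemma bStar_nonempty {A : Type*} (π : A → ℝ) {S : Finset A} (hS : S.Nonempty) :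
    (bStar π S).Nonempty := by
  obtain ⟨b, hb, hbe⟩ := Finset.exists_mem_eq_sup' hS π
  exact ⟨b, Finset.mem_filter.2 ⟨hb, by simp [piStar, hS, ← hbe]⟩⟩

lemma pi_eq_of_mem_bStar {A : Type*} {π : A → ℝ} {S : Finset A} {b : A}
    (h : b ∈ bStar π S) : π b = piStar π S := (Finset.mem_filter.1 h).2

lemma sum_pi_y {A : Type*} [Fintype A] (π : A → ℝ) (S : Finset A) (y : A → ℝ)
    (hy : ∑ b, y b = 1) (hsupp : ∀ b, y b ≠ 0 → b ∈ bStar π S) :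
    ∑ b : A, π b * y b = piStar π S := by
  have h : ∀ b ∈ Finset.univ, π b * y b = piStar π S * y b := by
    intro b _
    by_cases h : y b = 0
    · simp [h]
    · rw [pi_eq_of_mem_bStar (hsupp b h)]
  rw [Finset.sum_congr rfl h, ← Finset.mul_sum, hy, mul_one]

/-- Stationarity of the dynamic is equivalent to Nash equilibrium: `0 ∈ V(x)[π]` iff
every action in use is optimal (so, for a population game `F`, `0 ∈ V(x)[F(x)]` iff
`x ∈ NE(F)`). -/
theorem stmt16 {A : Type*} [Fintype A] [DecidableEq A] [Nonempty A]
    (P : A → Finset A → ℝ) (μQ : Measure ℝ) [IsProbabilityMeasure μQ]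
    (hPnn : ∀ a A', 0 ≤ P a A')
    (hPsupp : ∀ a A', ¬ A' ⊆ Finset.univ.erase a → P a A' = 0)
    (hPempty : ∀ a, P a (∅ : Finset A) = 0)
    (hPsum : ∀ a, ∑ A' ∈ (Finset.univ.erase a).powerset, P a A' = 1)
    -- Assumption Q1
    (hQ1a : ∀ q : ℝ, q < 0 → Qfun μQ q = 0)
    (hQ1b : ∀ q : ℝ, 0 < q → 0 < Qfun μQ q)
    -- Assumption A1-i
    (hA1i : ∀ a b : A, b ≠ a →
      0 < ∑ A' ∈ (Finset.univ.erase a).powerset.filter (fun A' => b ∈ A'), P a A')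
    (x : A → ℝ) (hx : x ∈ stdSimplex ℝ A) (π : A → ℝ) :
    (0 : A → ℝ) ∈ Vset P μQ x π ↔
      ∀ a : A, 0 < x a → π a = Finset.univ.sup' Finset.univ_nonempty π := by

  constructor
  · rintro ⟨z, hadm, h0⟩ a ha
    choose y ρ h using hadm
    by_contra hne
    have haM : π a < Finset.univ.sup' Finset.univ_nonempty π :=
      lt_of_le_of_ne (Finset.le_sup' π (Finset.mem_univ a)) hne
    obtain ⟨c, -, hc⟩ := Finset.exists_mem_eq_sup' Finset.univ_nonempty π
    have hca : c ≠ a := by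
      rintro rfl; rw [hc] at haM; exact lt_irrefl _ haM
    have hTnn : ∀ a' : A, ∀ A' ∈ (Finset.univ.erase a').powerset,
        0 ≤ P a' A' * ρ a' A' * (piStar π A' - π a') := by
      intro a' A' hA'
      rcases A'.eq_empty_or_nonempty with rfl | hne'
      · simp [hPempty]
      · obtain ⟨-, -, hρ⟩ := (h a').1 A' hA' hne'
        rcases lt_trichotomy (piStar π A' - π a') 0 with hd | hd | hd
        · have h1 : ρ a' A' ≤ 0 := hρ.2.trans (le_of_eq (hQ1a _ hd))
          have h2 : 0 ≤ ρ a' A' := le_trans (Qminus_nonneg μQ _) hρ.1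
          have hz : ρ a' A' = 0 := le_antisymm h1 h2
          simp [hz]
        · rw [hd]; simp
        · exact mul_nonneg (mul_nonneg (hPnn _ _) (le_trans (Qminus_nonneg μQ _) hρ.1)) hd.le
    have hzS : ∀ a' : A, ∑ b : A, π b * z a' b
        = ∑ A' ∈ (Finset.univ.erase a').powerset,
            P a' A' * ρ a' A' * (piStar π A' - π a') := by
      intro a'
      rw [(h a').2]
      simp only
      simp_rw [Finset.mul_sum]
      rw [Finset.sum_comm]
      refine Finset.sum_congr rfl (fun A' hA' => ?_)
      rcases A'.eq_empty_or_nonempty with rfl | hne'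
      · simp [hPempty]
      · obtain ⟨hysimp, hysupp, -⟩ := (h a').1 A' hA' hne'
        have h1 : ∑ b : A, π b * y a' A' b = piStar π A' := sum_pi_y π A' _ hysimp.2 hysupp
        have hstep : ∀ b ∈ Finset.univ,
            π b * (P a' A' * ρ a' A' * (y a' A' b - (if b = a' then (1:ℝ) else 0)))
            = P a' A' * ρ a' A' * (π b * y a' A' b)
              - P a' A' * ρ a' A' * (π b * (if b = a' then (1:ℝ) else 0)) := by
          intro b _; ring
        rw [Finset.sum_congr rfl hstep, Finset.sum_sub_distrib, ← Finset.mul_sum,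
          ← Finset.mul_sum, h1]
        have h2 : ∑ b : A, π b * (if b = a' then (1:ℝ) else 0) = π a' := by simp
        rw [h2]; ring
    have h0' : ∀ b : A, ∑ a' : A, x a' * z a' b = 0 := by
      intro b
      have := congrFun h0 b
      simpa using this.symm
    have htotal : ∑ a' : A, x a' * (∑ A' ∈ (Finset.univ.erase a').powerset,
        P a' A' * ρ a' A' * (piStar π A' - π a')) = 0 := by
      have swap : ∑ a' : A, x a' * (∑ b : A, π b * z a' b)
          = ∑ b : A, π b * (∑ a' : A, x a' * z a' b) := by
        simp_rw [Finset.mul_sum]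
        rw [Finset.sum_comm]
        exact Finset.sum_congr rfl fun b _ => Finset.sum_congr rfl fun a' _ => by ring
      have key : ∑ a' : A, x a' * (∑ b : A, π b * z a' b) = 0 := by
        rw [swap]; simp [h0']
      simpa [hzS] using key
    have heach := (Finset.sum_eq_zero_iff_of_nonneg (fun a' _ =>
      mul_nonneg (hx.1 a') (Finset.sum_nonneg (fun A' hA' => hTnn a' A' hA')))).1 htotal
    have hSa : ∑ A' ∈ (Finset.univ.erase a).powerset,
        P a A' * ρ a A' * (piStar π A' - π a) = 0 := by
      have := heach a (Finset.mem_univ a)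
      rcases mul_eq_zero.1 this with h' | h'
      · exact absurd h' (ne_of_gt ha)
      · exact h'
    have hT0 := (Finset.sum_eq_zero_iff_of_nonneg (hTnn a)).1 hSa
    obtain ⟨A', hA'f, hPne⟩ := Finset.exists_ne_zero_of_sum_ne_zero (hA1i a c hca).ne'
    rw [Finset.mem_filter] at hA'f
    obtain ⟨hA'p, hcA'⟩ := hA'f
    have hA'ne : A'.Nonempty := ⟨c, hcA'⟩
    have hps : π c ≤ piStar π A' := by
      rw [piStar, dif_pos hA'ne]; exact Finset.le_sup' π hcA'
    have hd : 0 < piStar π A' - π a := by rw [hc] at haM; linarith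
    obtain ⟨-, -, hρ⟩ := (h a).1 A' hA'p hA'ne
    have hρpos : 0 < ρ a A' :=
      lt_of_lt_of_le (lt_of_lt_of_le (hQ1b _ (by linarith : 0 < (piStar π A' - π a)/2))
        (Qfun_le_Qminus μQ (by linarith))) hρ.1
    have hPpos : 0 < P a A' := (hPnn a A').lt_of_ne (Ne.symm hPne)
    have hcontra := hT0 A' hA'p
    nlinarith [mul_pos (mul_pos hPpos hρpos) hd]
  · intro hNash
    set pick : Finset A → A :=
      fun S => if h : (bStar π S).Nonempty then h.choose else Classical.arbitrary A with hpick
    set y : Finset A → A → ℝ := fun S b => if b = pick S then 1 else 0 with hy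
    refine ⟨fun a b => ∑ A' ∈ (Finset.univ.erase a).powerset,
      P a A' * Qminus μQ (piStar π A' - π a) * (y A' b - if b = a then (1:ℝ) else 0),
      fun a => ?_, ?_⟩
    · refine ⟨y, fun A' => Qminus μQ (piStar π A' - π a), fun A' hA' hne' => ?_, rfl⟩
      have hbne : (bStar π A').Nonempty := bStar_nonempty π hne'
      refine ⟨⟨fun b => ?_, ?_⟩, fun b hb => ?_, ?_⟩
      · simp only [hy]; split <;> norm_num
      · simp [hy]
      · have hb' : b = pick A' := by
          by_contra h'; exact hb (by simp [hy, h'])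
        rw [hb']
        simp only [hpick]
        rw [dif_pos hbne]
        exact hbne.choose_spec
      · exact ⟨le_refl _, Qminus_le_Qfun μQ _⟩
    · funext b
      simp only [Pi.zero_apply]
      symm
      refine Finset.sum_eq_zero fun a _ => ?_
      rcases eq_or_lt_of_le (hx.1 a) with hxa | hxa
      · rw [← hxa, zero_mul]
      · have hz : ∀ A' ∈ (Finset.univ.erase a).powerset,
            P a A' * Qminus μQ (piStar π A' - π a) * (y A' b - if b = a then (1:ℝ) else 0)
              = 0 := by
          intro A' hA'
          rcases A'.eq_empty_or_nonempty with rfl | hne'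
          · simp [hPempty]
          · have hle : piStar π A' ≤ π a := by
              rw [hNash a hxa, piStar, dif_pos hne']
              exact Finset.sup'_le _ _ fun b' _ => Finset.le_sup' π (Finset.mem_univ b')
            rw [Qminus_eq_zero μQ hQ1a (by linarith)]
            ring
        rw [Finset.sum_eq_zero hz, mul_zero]
end

section
/- Let F be the restriction to Δ^𝒜 of a continuously differentiable map defined on an open neighborhood of Δ^𝒜 in ℝ^𝒜, with derivative DF. Then F is a stable game if and only if z·DF(x)z ≤ 0 for all x ∈ Δ^𝒜 and all z ∈ TΔ^𝒜. -/
open Finset Filter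

private lemma key_deriv {A : Type*} [Fintype A]
    (U : Set (A → ℝ)) (hU : IsOpen U)
    (Φ : (A → ℝ) → (A → ℝ)) (hΦ : ContDiffOn ℝ 1 Φ U)
    (x z : A → ℝ) (t : ℝ) (hmem : x + t • z ∈ U) :
    HasDerivAt (fun s => ∑ a : A, z a * Φ (x + s • z) a)
      (∑ a : A, z a * (fderiv ℝ Φ (x + t • z) z) a) t := by
  have hdiff : DifferentiableAt ℝ Φ (x + t • z) :=
    (hΦ.differentiableOn one_ne_zero).differentiableAt (hU.mem_nhds hmem)
  have hc : HasDerivAt (fun s : ℝ => x + s • z) z t := by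
    simpa using ((hasDerivAt_id t).smul_const z).const_add x
  have hcomp : HasDerivAt (fun s => Φ (x + s • z)) (fderiv ℝ Φ (x + t • z) z) t :=
    hdiff.hasFDerivAt.comp_hasDerivAt t hc
  exact HasDerivAt.fun_sum fun a _ => (hasDerivAt_pi.mp hcomp a).const_mul (z a)

private lemma nsd_interior {A : Type*} [Fintype A]
    (U : Set (A → ℝ)) (hU : IsOpen U) (hΔU : stdSimplex ℝ A ⊆ U)
    (Φ : (A → ℝ) → (A → ℝ)) (hΦ : ContDiffOn ℝ 1 Φ U)
    (hmono : ∀ x ∈ stdSimplex ℝ A, ∀ x' ∈ stdSimplex ℝ A,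
        ∑ a : A, (x' a - x a) * (Φ x' a - Φ x a) ≤ 0)
    (y : A → ℝ) (hy : y ∈ stdSimplex ℝ A) (δ : ℝ) (hδ : 0 < δ)
    (hyδ : ∀ a, δ ≤ y a) (z : A → ℝ) (hz : ∑ a : A, z a = 0) :
    ∑ a : A, z a * (fderiv ℝ Φ y z) a ≤ 0 := by
  set t₀ : ℝ := δ / (‖z‖ + 1) with ht₀def
  have hznorm : (0:ℝ) ≤ ‖z‖ := norm_nonneg z
  have ht₀ : 0 < t₀ := div_pos hδ (by linarith)
  have hseg : ∀ t ∈ Set.Icc (0:ℝ) t₀, y + t • z ∈ stdSimplex ℝ A := by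
    rintro t ⟨ht0, ht1⟩
    constructor
    · intro a
      have hza : |z a| ≤ ‖z‖ := by
        simpa [Real.norm_eq_abs] using norm_le_pi_norm z a
      have h1 : t * ‖z‖ ≤ t₀ * ‖z‖ := mul_le_mul_of_nonneg_right ht1 hznorm
      have h2 : t₀ * ‖z‖ ≤ δ := by
        rw [ht₀def, div_mul_eq_mul_div, div_le_iff₀ (by linarith)]
        nlinarith
      have h3 : -(t * z a) ≤ t * ‖z‖ := by
        have h4 := neg_abs_le (z a)
        nlinarith [abs_nonneg (z a)]
      have := hyδ a
      simp only [Pi.add_apply, Pi.smul_apply, smul_eq_mul]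
      linarith
    · simp [Finset.sum_add_distrib, hy.2, ← Finset.mul_sum, hz]
  set h : ℝ → ℝ := fun s => ∑ a : A, z a * Φ (y + s • z) a with hdef
  have hanti : ∀ s ∈ Set.Icc (0:ℝ) t₀, ∀ t ∈ Set.Icc (0:ℝ) t₀, s ≤ t → h t ≤ h s := by
    intro s hs t ht hst
    rcases eq_or_lt_of_le hst with rfl | hst
    · exact le_rfl
    have hkey := hmono (y + s • z) (hseg s hs) (y + t • z) (hseg t ht)
    have hmul : (t - s) * ∑ a : A, z a * (Φ (y + t • z) a - Φ (y + s • z) a) ≤ 0 := by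
      rw [Finset.mul_sum]
      calc ∑ a : A, (t - s) * (z a * (Φ (y + t • z) a - Φ (y + s • z) a))
          = ∑ a : A, ((y + t • z) a - (y + s • z) a) * (Φ (y + t • z) a - Φ (y + s • z) a) := by
            refine Finset.sum_congr rfl fun a _ => ?_
            simp only [Pi.add_apply, Pi.smul_apply, smul_eq_mul]; ring
        _ ≤ 0 := hkey
    have hsum : ∑ a : A, z a * (Φ (y + t • z) a - Φ (y + s • z) a) ≤ 0 := by
      by_contra hc
      push_neg at hc
      nlinarith
    have hht : h t - h s = ∑ a : A, z a * (Φ (y + t • z) a - Φ (y + s • z) a) := by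
      simp [hdef, mul_sub, Finset.sum_sub_distrib]
    linarith
  have hyU : y ∈ U := hΔU hy
  have hD : HasDerivAt h (∑ a : A, z a * (fderiv ℝ Φ y z) a) 0 := by
    have := key_deriv U hU Φ hΦ y z 0 (by simpa using hyU)
    simpa using this
  have hslope : Tendsto (slope h 0) (nhdsWithin 0 (Set.Ioi 0))
      (nhds (∑ a : A, z a * (fderiv ℝ Φ y z) a)) :=
    (hasDerivAt_iff_tendsto_slope.mp hD).mono_left
      (nhdsWithin_mono 0 (fun t ht => ne_of_gt ht))
  refine le_of_tendsto hslope ?_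
  filter_upwards [Ioc_mem_nhdsGT_of_mem ⟨le_rfl, ht₀⟩] with t ht
  have h0 : h t ≤ h 0 := hanti 0 ⟨le_rfl, le_of_lt ht₀⟩ t ⟨le_of_lt ht.1, ht.2⟩ (le_of_lt ht.1)
  rw [slope_def_field]
  exact div_nonpos_of_nonpos_of_nonneg (by linarith) (by linarith [ht.1])

/-- A population game `F` — the restriction to the simplex `Δ^𝒜` of a continuously
differentiable map `Φ` defined on an open neighborhood `U` of `Δ^𝒜` — is a stable game
if and only if its Jacobian `DF(x)` is negative semidefinite with respect to the
tangent space `TΔ^𝒜 = {z : Σ_a z_a = 0}` at every `x ∈ Δ^𝒜`. -/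
theorem stmt17 {A : Type*} [Fintype A] [Nonempty A]
    (U : Set (A → ℝ)) (hU : IsOpen U) (hΔU : stdSimplex ℝ A ⊆ U)
    (Φ : (A → ℝ) → (A → ℝ)) (hΦ : ContDiffOn ℝ 1 Φ U) :
    (∀ x ∈ stdSimplex ℝ A, ∀ x' ∈ stdSimplex ℝ A,
        ∑ a : A, (x' a - x a) * (Φ x' a - Φ x a) ≤ 0) ↔
      (∀ x ∈ stdSimplex ℝ A, ∀ z : A → ℝ, ∑ a : A, z a = 0 →
        ∑ a : A, z a * (fderiv ℝ Φ x z) a ≤ 0) := by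
  constructor
  · -- forward direction
    intro hmono x hx z hz
    set n : ℝ := (Fintype.card A : ℝ) with hn
    have hnpos : (0:ℝ) < n := by
      simp [hn, Nat.cast_pos, Fintype.card_pos]
    set X : ℝ → (A → ℝ) := fun ε a => (1 - ε) * x a + ε / n with hX
    have hXmem : ∀ ε ∈ Set.Ioc (0:ℝ) 1, X ε ∈ stdSimplex ℝ A := by
      rintro ε ⟨hε0, hε1⟩
      constructor
      · intro a
        have := hx.1 a
        have h1 : 0 ≤ (1 - ε) * x a := mul_nonneg (by linarith) this
        have h2 : 0 ≤ ε / n := le_of_lt (div_pos hε0 hnpos)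
        simp only [hX]; linarith
      · simp only [hX]
        rw [Finset.sum_add_distrib, ← Finset.mul_sum, hx.2, Finset.sum_const,
          Finset.card_univ, nsmul_eq_mul]
        field_simp
        rw [← hn]; ring
    have hXbd : ∀ ε ∈ Set.Ioc (0:ℝ) 1, ∀ a, ε / n ≤ X ε a := by
      rintro ε ⟨hε0, hε1⟩ a
      have h1 : 0 ≤ (1 - ε) * x a := mul_nonneg (by linarith) (hx.1 a)
      simp only [hX]; linarith
    have hQ : ∀ ε ∈ Set.Ioc (0:ℝ) 1, ∑ a : A, z a * (fderiv ℝ Φ (X ε) z) a ≤ 0 := by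
      intro ε hε
      exact nsd_interior U hU hΔU Φ hΦ hmono (X ε) (hXmem ε hε) (ε / n)
        (div_pos hε.1 hnpos) (hXbd ε hε) z hz
    -- take ε → 0
    have hXcont : Continuous X := by
      apply continuous_pi
      intro a
      fun_prop
    have hX0 : X 0 = x := by
      funext a; simp [hX]
    have htend : Tendsto X (nhdsWithin 0 (Set.Ioi 0)) (nhds x) := by
      rw [← hX0]
      exact (hXcont.tendsto 0).mono_left nhdsWithin_le_nhds
    have hfC : ContinuousOn (fun y => fderiv ℝ Φ y) U :=
      hΦ.continuousOn_fderiv_of_isOpen hU le_rfl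
    have hfx : ContinuousAt (fun y => fderiv ℝ Φ y) x :=
      hfC.continuousAt (hU.mem_nhds (hΔU hx))
    have h1 : Tendsto (fun ε => fderiv ℝ Φ (X ε)) (nhdsWithin 0 (Set.Ioi 0))
        (nhds (fderiv ℝ Φ x)) := hfx.tendsto.comp htend
    have h2 : Tendsto (fun ε => ∑ a : A, z a * (fderiv ℝ Φ (X ε) z) a)
        (nhdsWithin 0 (Set.Ioi 0)) (nhds (∑ a : A, z a * (fderiv ℝ Φ x z) a)) := by
      apply tendsto_finset_sum
      intro a _
      have heval : Continuous fun L : (A → ℝ) →L[ℝ] (A → ℝ) => L z a := by fun_prop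
      exact ((heval.tendsto _).comp h1).const_mul (z a)
    refine le_of_tendsto h2 ?_
    filter_upwards [Ioc_mem_nhdsGT_of_mem ⟨le_rfl, one_pos⟩] with ε hε
    exact hQ ε hε
  · -- backward direction
    intro hnsd x hx x' hx'
    set z : A → ℝ := fun a => x' a - x a with hzdef
    have hz : ∑ a : A, z a = 0 := by
      simp [hzdef, Finset.sum_sub_distrib, hx.2, hx'.2]
    have hmemΔ : ∀ t ∈ Set.Icc (0:ℝ) 1, x + t • z ∈ stdSimplex ℝ A := by
      rintro t ⟨ht0, ht1⟩
      have := (convex_stdSimplex ℝ A) hx hx' (by linarith : (0:ℝ) ≤ 1 - t) ht0 (by ring)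
      convert this using 1
      funext a
      simp [hzdef, smul_eq_mul]; ring
    set φ : ℝ → ℝ := fun t => ∑ a : A, z a * Φ (x + t • z) a with hφ
    have hder : ∀ t ∈ Set.Icc (0:ℝ) 1,
        HasDerivAt φ (∑ a : A, z a * (fderiv ℝ Φ (x + t • z) z) a) t := fun t ht =>
      key_deriv U hU Φ hΦ x z t (hΔU (hmemΔ t ht))
    have hanti : AntitoneOn φ (Set.Icc 0 1) := by
      apply antitoneOn_of_deriv_nonpos (convex_Icc 0 1)
      · exact fun t ht => (hder t ht).continuousAt.continuousWithinAt
      · rw [interior_Icc]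
        exact fun t ht => ((hder t (Set.mem_Icc_of_Ioo ht)).differentiableAt).differentiableWithinAt
      · rw [interior_Icc]
        intro t ht
        rw [(hder t (Set.mem_Icc_of_Ioo ht)).deriv]
        exact hnsd (x + t • z) (hmemΔ t (Set.mem_Icc_of_Ioo ht)) z hz
    have hkey : φ 1 ≤ φ 0 := hanti ⟨le_rfl, zero_le_one⟩ ⟨zero_le_one, le_rfl⟩ zero_le_one
    have h1 : x + (1:ℝ) • z = x' := by funext a; simp [hzdef]
    have h0 : x + (0:ℝ) • z = x := by funext a; simp
    have heq : ∑ a : A, (x' a - x a) * (Φ x' a - Φ x a) = φ 1 - φ 0 := by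
      simp only [hφ, h1, h0]
      simp only [mul_sub, Finset.sum_sub_distrib, hzdef]
    linarith
end

section
/- (Gains in the birth–death / excess-payoff framework) Assume Q1 and A1-i' and that μ_Q is atomless. Then: (a) H(x)[π] ≤ 0 for all x ∈ Δ^𝒜 and π ∈ ℝ^𝒜, with H(x)[π] = 0 if and only if every a ∈ 𝒜 with x_a > 0 satisfies π_a = max_{b∈𝒜} π_b; (b) for any family (y(A')) with each y(A') ∈ Δ^𝒜 supported on b_*[π](A'), the vector Δx := Σ_{∅≠A'⊆𝒜} ℙ_𝒜(A') · Q(π̂_*(A')) · (y(A') − x) is such that the function t ↦ G(x + tΔx)[π] has a right derivative at t = 0 equal to H(x)[π]. -/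
open MeasureTheory Finset
open scoped Classical

/-- The excess payoff of the best available action: `π̂_*(A') = π_*(A') - π·x`. -/
noncomputable def excess {A : Type*} [Fintype A]
    (x π : A → ℝ) (S : Finset A) : ℝ :=
  piStar π S - ∑ a : A, π a * x a

/-- The aggregate first-order gain in the birth–death (excess-payoff) framework. -/
noncomputable def Gbd {A : Type*} [Fintype A]
    (PA : Finset A → ℝ) (μQ : Measure ℝ) (x π : A → ℝ) : ℝ :=
  ∑ A' ∈ (Finset.univ : Finset A).powerset,
    PA A' * ∫ q, max (excess x π A' - q) 0 ∂μQ

/-- The decaying rate function in the birth–death (excess-payoff) framework. -/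
noncomputable def Hbd {A : Type*} [Fintype A]
    (PA : Finset A → ℝ) (μQ : Measure ℝ) (x π : A → ℝ) : ℝ :=
  -(∑ A' ∈ (Finset.univ : Finset A).powerset, PA A' * Qfun μQ (excess x π A')) *
    (∑ A' ∈ (Finset.univ : Finset A).powerset,
      PA A' * Qfun μQ (excess x π A') * excess x π A')

section AuxAnalysis
variable (μ : Measure ℝ) [IsProbabilityMeasure μ]

lemma aux_Qnn (q : ℝ) : 0 ≤ Qfun μ q := ENNReal.toReal_nonneg

lemma aux_Iio0 (hQ1a : ∀ q : ℝ, q < 0 → Qfun μ q = 0) : μ (Set.Iio 0) = 0 := by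
  have hU : Set.Iio (0:ℝ) = ⋃ n : ℕ, Set.Iic (-(1/((n:ℝ)+1))) := by
    ext q
    simp only [Set.mem_Iio, Set.mem_iUnion, Set.mem_Iic]
    constructor
    · intro hq
      obtain ⟨n, hn⟩ := exists_nat_one_div_lt (show (0:ℝ) < -q by linarith)
      exact ⟨n, by linarith⟩
    · rintro ⟨n, hn⟩
      have : (0:ℝ) < 1/((n:ℝ)+1) := by positivity
      linarith
  rw [hU]
  refine measure_iUnion_null fun n => ?_
  have hpos : (0:ℝ) < 1/((n:ℝ)+1) := by positivity
  have h := hQ1a (-(1/((n:ℝ)+1))) (by linarith)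
  rw [Qfun] at h
  rcases ENNReal.toReal_eq_zero_iff _ |>.mp h with h0 | htop
  · exact h0
  · exact absurd htop (measure_ne_top μ _)

lemma aux_Qzero (hQ1a : ∀ q : ℝ, q < 0 → Qfun μ q = 0)
    (hatomless : ∀ q : ℝ, μ {q} = 0) {q : ℝ} (hq : q ≤ 0) : Qfun μ q = 0 := by
  rcases lt_or_eq_of_le hq with h | rfl
  · exact hQ1a q h
  · have : μ (Set.Iic (0:ℝ)) = 0 := by
      rw [← Set.Iio_union_right]
      exact measure_union_null (aux_Iio0 μ hQ1a) (hatomless 0)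
    rw [Qfun, this]; simp

lemma aux_int (hsupp : μ (Set.Iio 0) = 0) (r : ℝ) :
    Integrable (fun q => max (r - q) 0) μ := by
  refine Integrable.mono' (integrable_const |r|) ?_ ?_
  · exact ((continuous_const.sub continuous_id).max continuous_const).aestronglyMeasurable
  · have hae : ∀ᵐ q ∂μ, 0 ≤ q := by
      rw [ae_iff]
      simp only [not_le]
      exact hsupp
    filter_upwards [hae] with q hq
    rw [Real.norm_eq_abs, abs_of_nonneg (le_max_right _ _)]
    have : r - q ≤ |r| := by
      have := le_abs_self r; linarith
    exact max_le this (abs_nonneg r)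

lemma aux_diff (hsupp : μ (Set.Iio 0) = 0) {r s : ℝ} (h : r ≤ s) :
    (s - r) * Qfun μ r ≤ (∫ q, max (s - q) 0 ∂μ) - ∫ q, max (r - q) 0 ∂μ ∧
    (∫ q, max (s - q) 0 ∂μ) - ∫ q, max (r - q) 0 ∂μ ≤ (s - r) * Qfun μ s := by
  have hint_r := aux_int μ hsupp r
  have hint_s := aux_int μ hsupp s
  rw [← integral_sub hint_s hint_r]
  have hind : ∀ u : ℝ, Integrable ((Set.Iic u).indicator (fun _ => (s - r : ℝ))) μ :=
    fun u => (integrable_const (s - r)).indicator measurableSet_Iic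
  have hval : ∀ u : ℝ, (∫ q, (Set.Iic u).indicator (fun _ => (s - r : ℝ)) q ∂μ)
      = (s - r) * Qfun μ u := by
    intro u
    rw [integral_indicator_const _ measurableSet_Iic]
    simp [Qfun, mul_comm, Measure.real]
  constructor
  · rw [← hval r]
    refine integral_mono (hind r) (hint_s.sub hint_r) fun q => ?_
    by_cases hq : q ≤ r
    · simp only [Set.indicator_of_mem (Set.mem_Iic.mpr hq)]
      rw [show max (s - q) 0 = s - q from max_eq_left (by linarith),
        show max (r - q) 0 = r - q from max_eq_left (by linarith)]
      linarith
    · simp only [Set.indicator_of_notMem (fun hmem => hq (Set.mem_Iic.mp hmem))]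
      have : max (r - q) 0 ≤ max (s - q) 0 := max_le_max (by linarith) le_rfl
      linarith
  · rw [← hval s]
    refine integral_mono (hint_s.sub hint_r) (hind s) fun q => ?_
    by_cases hq : q ≤ s
    · simp only [Set.indicator_of_mem (Set.mem_Iic.mpr hq)]
      rcases le_or_gt q r with h1 | h1
      · rw [show max (s - q) 0 = s - q from max_eq_left (by linarith),
          show max (r - q) 0 = r - q from max_eq_left (by linarith)]
        linarith
      · rw [show max (r - q) 0 = 0 from max_eq_right (by linarith)]
        have : max (s - q) 0 ≤ s - r := max_le (by linarith) (by linarith)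
        linarith
    · push_neg at hq
      simp only [Set.indicator_of_notMem
        (fun hmem => absurd (Set.mem_Iic.mp hmem) (not_le.mpr hq))]
      rw [show max (s - q) 0 = 0 from max_eq_right (by linarith),
        show max (r - q) 0 = 0 from max_eq_right (by linarith)]
      simp

lemma aux_Ioc {r s : ℝ} (h : r ≤ s) :
    Qfun μ s - Qfun μ r = (μ (Set.Ioc r s)).toReal := by
  have heq : Set.Iic s = Set.Iic r ∪ Set.Ioc r s := (Set.Iic_union_Ioc_eq_Iic h).symm
  rw [Qfun, Qfun, heq, measure_union (Set.Iic_disjoint_Ioc le_rfl) measurableSet_Ioc,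
    ENNReal.toReal_add (measure_ne_top μ _) (measure_ne_top μ _)]
  ring

lemma aux_hasDeriv (hsupp : μ (Set.Iio 0) = 0) (hatomless : ∀ q : ℝ, μ {q} = 0) (r : ℝ) :
    HasDerivAt (fun s => ∫ q, max (s - q) 0 ∂μ) (Qfun μ r) r := by
  rw [hasDerivAt_iff_tendsto_slope, Metric.tendsto_nhdsWithin_nhds]
  intro ε hε
  have hiInter : (⋂ n : ℕ, Set.Icc (r - 1/((n:ℝ)+1)) (r + 1/((n:ℝ)+1))) = {r} := by
    ext q
    simp only [Set.mem_iInter, Set.mem_Icc, Set.mem_singleton_iff]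
    constructor
    · intro hq
      by_contra hne
      obtain ⟨n, hn⟩ := exists_nat_one_div_lt
        (show (0:ℝ) < |q - r| from abs_pos.mpr (sub_ne_zero.mpr hne))
      have h1 := (hq n).1
      have h2 := (hq n).2
      have : |q - r| ≤ 1/((n:ℝ)+1) := abs_le.mpr ⟨by linarith, by linarith⟩
      linarith
    · rintro rfl n
      have : (0:ℝ) < 1/((n:ℝ)+1) := by positivity
      constructor <;> linarith
  have hanti : Antitone (fun n : ℕ => Set.Icc (r - 1/((n:ℝ)+1)) (r + 1/((n:ℝ)+1))) := by
    intro n m hnm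
    have hc : ((n:ℝ)+1) ≤ (m:ℝ)+1 := by
      have : (n:ℝ) ≤ m := Nat.cast_le.mpr hnm
      linarith
    have h1 : (1:ℝ)/((m:ℝ)+1) ≤ 1/((n:ℝ)+1) :=
      one_div_le_one_div_of_le (by positivity) hc
    exact Set.Icc_subset_Icc (by linarith) (by linarith)
  have htend := tendsto_measure_iInter_atTop
    (μ := μ) (s := fun n : ℕ => Set.Icc (r - 1/((n:ℝ)+1)) (r + 1/((n:ℝ)+1)))
    (fun n => measurableSet_Icc.nullMeasurableSet) hanti ⟨0, measure_ne_top μ _⟩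
  rw [hiInter, hatomless r] at htend
  have htend' : Filter.Tendsto
      (fun n : ℕ => (μ (Set.Icc (r - 1/((n:ℝ)+1)) (r + 1/((n:ℝ)+1)))).toReal)
      Filter.atTop (nhds 0) := by
    have := (ENNReal.tendsto_toReal (by simp : (0:ENNReal) ≠ ⊤)).comp htend
    exact this
  obtain ⟨n, hn⟩ := (htend'.eventually_lt_const hε).exists
  set δ := 1/((n:ℝ)+1) with hδdef
  have hδ : 0 < δ := by positivity
  refine ⟨δ, hδ, fun x hx hdist => ?_⟩
  rw [Real.dist_eq] at hdist
  rw [Real.dist_eq, slope_def_field]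
  set F := fun s => ∫ q, max (s - q) 0 ∂μ with hF
  have hbound : (μ (Set.Icc (r - δ) (r + δ))).toReal < ε := hn
  rcases lt_or_gt_of_ne (show x ≠ r from hx) with hlt | hgt
  · have hb := aux_diff μ hsupp hlt.le
    have hpos : 0 < r - x := by linarith
    have heq : (F x - F r) / (x - r) = (F r - F x) / (r - x) := by
      rw [show F x - F r = -(F r - F x) by ring, show x - r = -(r - x) by ring,
        neg_div_neg_eq]
    rw [heq]
    have hup : (F r - F x) / (r - x) ≤ Qfun μ r := by
      rw [div_le_iff₀ hpos]; nlinarith [hb.2]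
    have hlo : Qfun μ x ≤ (F r - F x) / (r - x) := by
      rw [le_div_iff₀ hpos]; nlinarith [hb.1]
    have hIoc : Qfun μ r - Qfun μ x = (μ (Set.Ioc x r)).toReal := aux_Ioc μ hlt.le
    have hsub : Set.Ioc x r ⊆ Set.Icc (r - δ) (r + δ) := by
      intro a ha
      have h1 : x < a := ha.1
      have h2 : a ≤ r := ha.2
      have : r - x ≤ |x - r| := by rw [abs_sub_comm]; exact le_abs_self _
      exact ⟨by linarith, by linarith⟩
    have hmono : (μ (Set.Ioc x r)).toReal ≤ (μ (Set.Icc (r - δ) (r + δ))).toReal :=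
      ENNReal.toReal_mono (measure_ne_top μ _) (measure_mono hsub)
    rw [abs_of_nonpos (by linarith)]
    linarith
  · have hb := aux_diff μ hsupp hgt.le
    have hpos : 0 < x - r := by linarith
    have hlo : Qfun μ r ≤ (F x - F r) / (x - r) := by
      rw [le_div_iff₀ hpos]; nlinarith [hb.1]
    have hup : (F x - F r) / (x - r) ≤ Qfun μ x := by
      rw [div_le_iff₀ hpos]; nlinarith [hb.2]
    have hIoc : Qfun μ x - Qfun μ r = (μ (Set.Ioc r x)).toReal := aux_Ioc μ hgt.le
    have hsub : Set.Ioc r x ⊆ Set.Icc (r - δ) (r + δ) := by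
      intro a ha
      have : x - r ≤ |x - r| := le_abs_self _
      exact ⟨by linarith [ha.1.le], by linarith [ha.2]⟩
    have hmono : (μ (Set.Ioc r x)).toReal ≤ (μ (Set.Icc (r - δ) (r + δ))).toReal :=
      ENNReal.toReal_mono (measure_ne_top μ _) (measure_mono hsub)
    rw [abs_of_nonneg (by linarith)]
    linarith

end AuxAnalysis

/-- Gains in the birth–death / excess-payoff framework: `H ≤ 0`, with `H = 0` exactly
at the Nash states, and the right derivative of `t ↦ G(x + tΔx)[π]` at `0` equals
`H(x)[π]`. -/
theorem stmt19 {A : Type*} [Fintype A] [DecidableEq A] [Nonempty A]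
    (PA : Finset A → ℝ) (μQ : Measure ℝ) [IsProbabilityMeasure μQ]
    (hPnn : ∀ A', 0 ≤ PA A')
    (hPempty : PA (∅ : Finset A) = 0)
    (hPsum : ∑ A' ∈ (Finset.univ : Finset A).powerset, PA A' = 1)
    -- Assumption Q1
    (hQ1a : ∀ q : ℝ, q < 0 → Qfun μQ q = 0)
    (hQ1b : ∀ q : ℝ, 0 < q → 0 < Qfun μQ q)
    -- Assumption A1-i'
    (hA1i' : ∀ b : A,
      0 < ∑ A' ∈ (Finset.univ : Finset A).powerset.filter (fun A' => b ∈ A'), PA A')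
    -- `μ_Q` is atomless
    (hatomless : ∀ q : ℝ, μQ {q} = 0) :
    -- (a)
    (∀ x ∈ stdSimplex ℝ A, ∀ π : A → ℝ,
      Hbd PA μQ x π ≤ 0 ∧
      (Hbd PA μQ x π = 0 ↔
        ∀ a : A, 0 < x a → π a = Finset.univ.sup' Finset.univ_nonempty π)) ∧
    -- (b)
    (∀ x ∈ stdSimplex ℝ A, ∀ π : A → ℝ,
      ∀ y : Finset A → A → ℝ,
        (∀ A' ∈ (Finset.univ : Finset A).powerset, A'.Nonempty →
          y A' ∈ stdSimplex ℝ A ∧ ∀ b, y A' b ≠ 0 → b ∈ bStar π A') →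
        HasDerivWithinAt
          (fun t : ℝ => Gbd PA μQ
            (x + t • (fun b => ∑ A' ∈ (Finset.univ : Finset A).powerset,
              PA A' * Qfun μQ (excess x π A') * (y A' b - x b))) π)
          (Hbd PA μQ x π) (Set.Ici (0 : ℝ)) 0) := by
  have hsupp : μQ (Set.Iio 0) = 0 := aux_Iio0 μQ hQ1a
  have hQz : ∀ {q : ℝ}, q ≤ 0 → Qfun μQ q = 0 := fun hq => aux_Qzero μQ hQ1a hatomless hq
  -- nonnegativity of the B-terms
  have htermB : ∀ (x π : A → ℝ) (S : Finset A),
      0 ≤ PA S * Qfun μQ (excess x π S) * excess x π S := by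
    intro x π S
    rcases le_or_gt (excess x π S) 0 with h | h
    · rw [hQz h]; simp
    · exact mul_nonneg (mul_nonneg (hPnn S) (aux_Qnn μQ _)) h.le
  have hSAnn : ∀ (x π : A → ℝ),
      0 ≤ ∑ A' ∈ (Finset.univ : Finset A).powerset, PA A' * Qfun μQ (excess x π A') :=
    fun x π => Finset.sum_nonneg fun S _ => mul_nonneg (hPnn S) (aux_Qnn μQ _)
  have hSBnn : ∀ (x π : A → ℝ),
      0 ≤ ∑ A' ∈ (Finset.univ : Finset A).powerset,
        PA A' * Qfun μQ (excess x π A') * excess x π A' :=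
    fun x π => Finset.sum_nonneg fun S _ => htermB x π S
  constructor
  · -- part (a)
    intro x hx π
    obtain ⟨hx1, hx2⟩ := hx
    set M := (Finset.univ : Finset A).sup' Finset.univ_nonempty π with hM
    have hπxle : ∑ a : A, π a * x a ≤ M := by
      calc ∑ a : A, π a * x a ≤ ∑ a : A, M * x a :=
            Finset.sum_le_sum fun a _ =>
              mul_le_mul_of_nonneg_right (Finset.le_sup' π (Finset.mem_univ a)) (hx1 a)
        _ = M := by rw [← Finset.mul_sum, hx2, mul_one]
    constructor
    · -- H ≤ 0
      unfold Hbd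
      have := mul_nonneg (hSAnn x π) (hSBnn x π)
      nlinarith
    · -- H = 0 ↔ Nash
      have hcond : Hbd PA μQ x π = 0 ↔
          ∀ S ∈ (Finset.univ : Finset A).powerset, 0 < PA S → excess x π S ≤ 0 := by
        constructor
        · intro h
          unfold Hbd at h
          rcases mul_eq_zero.mp h with h0 | h0
          · rw [neg_eq_zero] at h0
            have hterm := (Finset.sum_eq_zero_iff_of_nonneg
              (fun S _ => mul_nonneg (hPnn S) (aux_Qnn μQ _))).mp h0
            intro S hS hPApos
            by_contra hlt
            push_neg at hlt
            have := hterm S hS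
            have hQpos := hQ1b _ hlt
            nlinarith
          · have hterm := (Finset.sum_eq_zero_iff_of_nonneg
              (fun S _ => htermB x π S)).mp h0
            intro S hS hPApos
            by_contra hlt
            push_neg at hlt
            have := hterm S hS
            have hQpos := hQ1b _ hlt
            exact absurd this (ne_of_gt (mul_pos (mul_pos hPApos hQpos) hlt))
        · intro h
          unfold Hbd
          have hB0 : (∑ A' ∈ (Finset.univ : Finset A).powerset,
              PA A' * Qfun μQ (excess x π A') * excess x π A') = 0 := by
            refine Finset.sum_eq_zero fun S hS => ?_
            rcases (hPnn S).eq_or_lt with h0 | h0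
            · rw [← h0]; ring
            · rw [hQz (h S hS h0)]; ring
          rw [hB0, mul_zero]
      rw [hcond]
      constructor
      · -- cond → Nash
        intro h a hxa
        obtain ⟨b₀, _, hb₀⟩ := Finset.exists_mem_eq_sup'
          (Finset.univ_nonempty (α := A)) π
        have hsumpos := hA1i' b₀
        obtain ⟨S, hSmem, hSne⟩ := Finset.exists_ne_zero_of_sum_ne_zero (ne_of_gt hsumpos)
        rw [Finset.mem_filter] at hSmem
        have hPApos : 0 < PA S := (hPnn S).lt_of_ne (Ne.symm hSne)
        have hSnon : S.Nonempty := ⟨b₀, hSmem.2⟩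
        have hMle : M ≤ piStar π S := by
          rw [piStar, dif_pos hSnon]
          calc M = π b₀ := hb₀
            _ ≤ S.sup' hSnon π := Finset.le_sup' π hSmem.2
        have hexc := h S hSmem.1 hPApos
        rw [excess] at hexc
        have hπx : ∑ a : A, π a * x a = M := le_antisymm hπxle (by linarith)
        have hzero : ∑ a : A, (M - π a) * x a = 0 := by
          have : ∑ a : A, (M - π a) * x a
              = M * (∑ a : A, x a) - ∑ a : A, π a * x a := by
            rw [Finset.mul_sum, ← Finset.sum_sub_distrib]
            exact Finset.sum_congr rfl fun a _ => by ring
          rw [this, hx2, hπx, mul_one, sub_self]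
        have hterm := (Finset.sum_eq_zero_iff_of_nonneg
          (fun a _ => mul_nonneg
            (sub_nonneg.mpr (Finset.le_sup' π (Finset.mem_univ a))) (hx1 a))).mp hzero
        have := hterm a (Finset.mem_univ a)
        rcases mul_eq_zero.mp this with h0 | h0
        · linarith [sub_eq_zero.mp h0]
        · exact absurd h0 (ne_of_gt hxa)
      · -- Nash → cond
        intro hN S hS hPApos
        have hπx : ∑ a : A, π a * x a = M := by
          have : ∀ a ∈ (Finset.univ : Finset A), π a * x a = M * x a := by
            intro a _
            rcases (hx1 a).eq_or_lt with h0 | h0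
            · rw [← h0, mul_zero, mul_zero]
            · rw [hN a h0]
          rw [Finset.sum_congr rfl this, ← Finset.mul_sum, hx2, mul_one]
        have hSnon : S.Nonempty := by
          rcases S.eq_empty_or_nonempty with rfl | h
          · rw [hPempty] at hPApos; exact absurd hPApos (lt_irrefl 0)
          · exact h
        rw [excess, hπx, piStar, dif_pos hSnon]
        have : S.sup' hSnon π ≤ M :=
          Finset.sup'_le hSnon π fun b _ => Finset.le_sup' π (Finset.mem_univ b)
        linarith
  · -- part (b)
    intro x hx π y hy
    set c := ∑ A' ∈ (Finset.univ : Finset A).powerset,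
      PA A' * Qfun μQ (excess x π A') * excess x π A' with hc
    set Δ : A → ℝ := fun b => ∑ A' ∈ (Finset.univ : Finset A).powerset,
      PA A' * Qfun μQ (excess x π A') * (y A' b - x b) with hΔ
    -- π · Δ = c
    have hdot : ∑ a : A, π a * Δ a = c := by
      calc ∑ a : A, π a * Δ a
          = ∑ a : A, ∑ S ∈ (Finset.univ : Finset A).powerset,
              PA S * Qfun μQ (excess x π S) * (π a * (y S a - x a)) := by
            refine Finset.sum_congr rfl fun a _ => ?_
            rw [hΔ, Finset.mul_sum]
            exact Finset.sum_congr rfl fun S _ => by ring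
        _ = ∑ S ∈ (Finset.univ : Finset A).powerset, ∑ a : A,
              PA S * Qfun μQ (excess x π S) * (π a * (y S a - x a)) := Finset.sum_comm
        _ = c := by
            rw [hc]
            refine Finset.sum_congr rfl fun S hS => ?_
            by_cases hPA : PA S = 0
            · simp [hPA]
            · have hSnon : S.Nonempty := by
                rcases S.eq_empty_or_nonempty with rfl | h
                · exact absurd hPempty hPA
                · exact h
              obtain ⟨⟨hy1, hy2⟩, hysupp⟩ := hy S hS hSnon
              have hπy : ∑ a : A, π a * y S a = piStar π S := by
                have h1 : ∀ a ∈ (Finset.univ : Finset A), π a * y S a = piStar π S * y S a := by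
                  intro a _
                  by_cases h0 : y S a = 0
                  · rw [h0, mul_zero, mul_zero]
                  · have hmem := hysupp a h0
                    rw [bStar, Finset.mem_filter] at hmem
                    rw [hmem.2]
                rw [Finset.sum_congr rfl h1, ← Finset.mul_sum, hy2, mul_one]
              calc ∑ a : A, PA S * Qfun μQ (excess x π S) * (π a * (y S a - x a))
                  = PA S * Qfun μQ (excess x π S)
                      * ((∑ a : A, π a * y S a) - ∑ a : A, π a * x a) := by
                    rw [← Finset.mul_sum]
                    congr 1
                    rw [← Finset.sum_sub_distrib]
                    exact Finset.sum_congr rfl fun a _ => by ring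
                _ = PA S * Qfun μQ (excess x π S) * excess x π S := by
                    rw [hπy, excess]
    -- the excess along the ray
    have hexc : ∀ (t : ℝ) (S : Finset A),
        excess (x + t • Δ) π S = excess x π S - t * c := by
      intro t S
      have hsum : ∑ a : A, π a * ((x + t • Δ) a) = (∑ a : A, π a * x a) + t * c := by
        have h1 : ∀ a ∈ (Finset.univ : Finset A),
            π a * ((x + t • Δ) a) = π a * x a + t * (π a * Δ a) := by
          intro a _
          simp only [Pi.add_apply, Pi.smul_apply, smul_eq_mul]
          ring
        rw [Finset.sum_congr rfl h1, Finset.sum_add_distrib, ← Finset.mul_sum, hdot]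
      rw [excess, excess, hsum]
      ring
    -- rewrite the function
    have hfun : (fun t : ℝ => Gbd PA μQ (x + t • Δ) π)
        = fun t : ℝ => ∑ S ∈ (Finset.univ : Finset A).powerset,
            PA S * ∫ q, max ((excess x π S - t * c) - q) 0 ∂μQ := by
      funext t
      rw [Gbd]
      exact Finset.sum_congr rfl fun S _ => by rw [hexc t S]
    rw [hfun]
    -- compute the derivative
    have hderiv : HasDerivAt
        (fun t : ℝ => ∑ S ∈ (Finset.univ : Finset A).powerset,
          PA S * ∫ q, max ((excess x π S - t * c) - q) 0 ∂μQ)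
        (∑ S ∈ (Finset.univ : Finset A).powerset,
          PA S * (Qfun μQ (excess x π S) * (-c))) 0 := by
      refine HasDerivAt.fun_sum fun S _ => HasDerivAt.const_mul (PA S) ?_
      have hinner : HasDerivAt (fun t : ℝ => excess x π S - t * c) (-c) 0 := by
        simpa using ((hasDerivAt_id (0:ℝ)).mul_const c).const_sub (excess x π S)
      have houter : HasDerivAt (fun s => ∫ q, max (s - q) 0 ∂μQ)
          (Qfun μQ (excess x π S)) ((fun t : ℝ => excess x π S - t * c) 0) := by
        rw [show (fun t : ℝ => excess x π S - t * c) 0 = excess x π S by simp]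
        exact aux_hasDeriv μQ hsupp hatomless (excess x π S)
      exact houter.comp 0 hinner
    have hval : (∑ S ∈ (Finset.univ : Finset A).powerset,
        PA S * (Qfun μQ (excess x π S) * (-c))) = Hbd PA μQ x π := by
      rw [Hbd, ← hc]
      have h1 : ∀ S ∈ (Finset.univ : Finset A).powerset,
          PA S * (Qfun μQ (excess x π S) * (-c))
            = PA S * Qfun μQ (excess x π S) * (-c) := fun S _ => by ring
      rw [Finset.sum_congr rfl h1, ← Finset.sum_mul]
      ring
    rw [← hval]
    exact hderiv.hasDerivWithinAt
end
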